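/- arXiv:2504.12598 — 6 statements merged into one kernel-verified Lean document; each statement's English description precedes it below -/
import Mathlib

section
/- Let d be a positive integer and N = (N_1, …, N_d) with each N_i an integer greater than 1. For every real s ≥ 2, the number of vectors b ∈ ℤ^d such that max over a ∈ ℤ^d of |MAP_N(a, b)| ≥ s is at most ∏_{i=1}^{d} (4N_i/s + 1). -/
open scoped Pointwise BigOperators

noncomputable section

/-- The set system discrepancy: minimum over ±1 colorings of the maximum
imbalance of a set in the system. -/
def discSys {α : Type*} (𝒮 : Set (Set α)) : ℝ :=
  ⨅ χ : α → Bool, ⨆ S ∈ 𝒮, |∑ᶠ x ∈ S, (if χ x then (1 : ℝ) else -1)|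

/-- The arithmetic progression AP_d(a, b, ℓ) = {a + i b : 0 ≤ i < ℓ}. -/
def APset {d : ℕ} (a b : Fin d → ℤ) (ℓ : ℕ) : Set (Fin d → ℤ) :=
  { z | ∃ i : ℕ, i < ℓ ∧ z = a + (i : ℤ) • b }

/-- The grid [N₁] × ⋯ × [N_d]. -/
def OmegaN {d : ℕ} (N : Fin d → ℤ) : Set (Fin d → ℤ) :=
  { x | ∀ i, 1 ≤ x i ∧ x i ≤ N i }

/-- The family of arithmetic progressions restricted to the universe Ω. -/
def APsys {d : ℕ} (Ω : Set (Fin d → ℤ)) : Set (Set (Fin d → ℤ)) :=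
  { S | ∃ (a b : Fin d → ℤ) (ℓ : ℕ), 0 < ℓ ∧ S = Ω ∩ APset a b ℓ }

/-- f(N) = max over I ⊆ [d] of (∏_{i ∈ I} N_i)^(1/(2|I|+2)). -/
def fVec {d : ℕ} (N : Fin d → ℤ) : ℝ :=
  ⨆ I : Finset (Fin d), (∏ i ∈ I, (N i : ℝ)) ^ ((1 : ℝ) / (2 * (I.card : ℝ) + 2))

/-- A convex body: compact, convex, with nonempty interior. -/
def IsConvexBody {d : ℕ} (K : Set (Fin d → ℝ)) : Prop :=
  Convex ℝ K ∧ IsCompact K ∧ (interior K).Nonempty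

/-- The integer points in a subset of ℝ^d. -/
def intPoints {d : ℕ} (A : Set (Fin d → ℝ)) : Set (Fin d → ℤ) :=
  { x | (fun i => (x i : ℝ)) ∈ A }

/-- ζ_A(t) = number of integer points in t·A. -/
def zetaSet {d : ℕ} (A : Set (Fin d → ℝ)) (t : ℝ) : ℕ :=
  (intPoints (t • A)).ncard

/-- f(K) = √(s*) where s* = inf {s > 0 : ζ_{K−K}(1/s) ≤ s}. -/
def fBody {d : ℕ} (K : Set (Fin d → ℝ)) : ℝ :=
  Real.sqrt (sInf { s : ℝ | 0 < s ∧ (zetaSet (K - K) (1 / s) : ℝ) ≤ s })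

/-- γ₂ of the 0/1 incidence matrix of the set system 𝒮 with columns indexed by the
universe Ω: the infimum over factorizations of the product of the max row norm of the
left factor and max column norm of the right factor. -/
def gamma2S {α : Type*} (Ω : Set α) (𝒮 : Set (Set α)) : ℝ :=
  sInf { c : ℝ | ∃ (k : ℕ) (L : 𝒮 → Fin k → ℝ) (R : Fin k → Ω → ℝ),
    (∀ (S : 𝒮) (x : Ω), (∑ t, L S t * R t x) =
        Set.indicator (S : Set α) (fun _ => (1 : ℝ)) (x : α)) ∧
    c = (⨆ S : 𝒮, Real.sqrt (∑ t, L S t ^ 2)) * (⨆ x : Ω, Real.sqrt (∑ t, R t x ^ 2)) }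

/-- γ₂ of a real matrix. -/
def gamma2M {m n : ℕ} (A : Matrix (Fin m) (Fin n) ℝ) : ℝ :=
  sInf { c : ℝ | ∃ (k : ℕ) (L : Matrix (Fin m) (Fin k) ℝ) (R : Matrix (Fin k) (Fin n) ℝ),
    A = L * R ∧
    c = (⨆ i : Fin m, Real.sqrt (∑ t, L i t ^ 2)) * (⨆ j : Fin n, Real.sqrt (∑ t, R t j ^ 2)) }

/-- Prefix discrepancy of a matrix. -/
def pdiscM {m n : ℕ} (A : Matrix (Fin m) (Fin n) ℝ) : ℝ :=
  ⨅ x : Fin n → Bool, ⨆ j : Fin n, ⨆ r : Fin m,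
    |∑ i ∈ Finset.univ.filter (fun i : Fin n => i ≤ j),
        (if x i then (1 : ℝ) else -1) * A r i|

/-- Prefix discrepancy of a set system on universe Ω with respect to the ordering σ. -/
def pdiscS {α : Type*} (Ω : Set α) (𝒮 : Set (Set α)) (σ : α → ℕ) : ℝ :=
  ⨅ χ : α → Bool, ⨆ j : ℕ, ⨆ S ∈ 𝒮,
    |∑ᶠ x ∈ {y ∈ Ω | y ∈ S ∧ σ y ≤ j}, (if χ x then (1 : ℝ) else -1)|

/-- The maximal arithmetic progression in Ω_N with difference b through a:
the residue class of a mod b intersected with Ω_N. -/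
def MAPN {d : ℕ} (N : Fin d → ℤ) (a b : Fin d → ℤ) : Set (Fin d → ℤ) :=
  { z | ∃ i : ℤ, z = a + i • b } ∩ OmegaN N

/-- The maximal arithmetic progression inside the convex body K with difference b
through a: the residue class of a mod b intersected with the integer points of K. -/
def MAPK {d : ℕ} (K : Set (Fin d → ℝ)) (a b : Fin d → ℤ) : Set (Fin d → ℤ) :=
  { z | ∃ i : ℤ, z = a + i • b } ∩ intPoints K

/-- The lexicographic order on ℤ^d. -/
def lexLe {d : ℕ} (x y : Fin d → ℤ) : Prop :=
  x = y ∨ ∃ i : Fin d, (∀ j : Fin d, j < i → x j = y j) ∧ x i < y i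

end

private lemma spread_lemma {S : Set ℤ} (hfin : S.Finite) {n : ℕ}
    (hn : n ≤ S.ncard) (hn1 : 1 ≤ n) :
    ∃ x ∈ S, ∃ y ∈ S, (n : ℤ) - 1 ≤ y - x := by
  have hne : S.Nonempty := by
    rw [Set.nonempty_iff_ne_empty]
    intro h
    rw [h, Set.ncard_empty] at hn
    omega
  have hFne : hfin.toFinset.Nonempty := by rwa [Set.Finite.toFinset_nonempty]
  set F := hfin.toFinset with hF
  have hsub : F ⊆ Finset.Icc (F.min' hFne) (F.max' hFne) := fun x hx =>
    Finset.mem_Icc.mpr ⟨Finset.min'_le _ _ hx, Finset.le_max' _ _ hx⟩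
  have hcard : F.card ≤ (F.max' hFne + 1 - F.min' hFne).toNat := by
    have := Finset.card_le_card hsub
    rwa [Int.card_Icc] at this
  have hnF : n ≤ F.card := by
    rwa [Set.ncard_eq_toFinset_card _ hfin] at hn
  refine ⟨F.min' hFne, ?_, F.max' hFne, ?_, ?_⟩
  · rw [← Set.Finite.mem_toFinset hfin]; exact F.min'_mem hFne
  · rw [← Set.Finite.mem_toFinset hfin]; exact F.max'_mem hFne
  · have : (n : ℤ) ≤ (F.max' hFne + 1 - F.min' hFne).toNat := by
      exact_mod_cast le_trans hnF hcard
    omega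

/-- for s ≥ 2, the number of differences b ∈ ℤ^d admitting a maximal AP in
Ω_N with at least s elements is at most ∏ᵢ (4Nᵢ/s + 1). -/
theorem stmt8 (d : ℕ) (hd : 0 < d) (N : Fin d → ℤ) (hN : ∀ i, 1 < N i)
    (s : ℝ) (hs : 2 ≤ s) :
    ({b : Fin d → ℤ | ∃ a : Fin d → ℤ, s ≤ ((MAPN N a b).ncard : ℝ)}.ncard : ℝ) ≤
      ∏ i, (4 * (N i : ℝ) / s + 1) := by
  have hs0 : (0:ℝ) < s := by linarith
  set n : ℕ := ⌈s⌉₊ with hn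
  have hns : s ≤ (n : ℝ) := Nat.le_ceil s
  have hn2 : 2 ≤ n := by
    have : ((2:ℕ):ℝ) ≤ (n:ℝ) := by push_cast; linarith
    exact_mod_cast this
  have hnz : (2:ℤ) ≤ (n:ℤ) := by exact_mod_cast hn2
  set m : Fin d → ℤ := fun j => (N j - 1) / ((n : ℤ) - 1) with hm
  have hm0 : ∀ j, 0 ≤ m j := fun j =>
    Int.ediv_nonneg (by have := hN j; omega) (by omega)
  have hkey : {b : Fin d → ℤ | ∃ a, s ≤ ((MAPN N a b).ncard : ℝ)} ⊆
      ↑(Fintype.piFinset fun j => Finset.Icc (-(m j)) (m j)) := by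
    intro b hb
    obtain ⟨a, ha⟩ := hb
    have hΩfin : (OmegaN N).Finite := by
      have hsub : OmegaN N ⊆ Set.pi Set.univ (fun i => Set.Icc 1 (N i)) := by
        intro x hx i _
        exact Set.mem_Icc.mpr (hx i)
      exact (Set.Finite.pi (fun i => Set.finite_Icc _ _)).subset hsub
    have hMfin : (MAPN N a b).Finite := hΩfin.subset Set.inter_subset_right
    have hcard : n ≤ (MAPN N a b).ncard := Nat.ceil_le.mpr ha
    have hb0 : b ≠ 0 := by
      intro h
      have hsub : MAPN N a b ⊆ {a} := by
        rintro z ⟨⟨i, rfl⟩, -⟩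
        simp [h]
      have := Set.ncard_le_ncard hsub (Set.finite_singleton a)
      rw [Set.ncard_singleton] at this
      omega
    obtain ⟨j0, hj0⟩ := Function.ne_iff.mp hb0
    have hinj : Function.Injective (fun i : ℤ => a + i • b) := by
      intro i j hij
      have h1 := congrFun hij j0
      simp only [Pi.add_apply, Pi.smul_apply, smul_eq_mul, add_right_inj] at h1
      exact mul_right_cancel₀ hj0 h1
    set I : Set ℤ := {i : ℤ | a + i • b ∈ OmegaN N} with hI
    have himg : MAPN N a b = (fun i : ℤ => a + i • b) '' I := by
      ext z
      constructor
      · rintro ⟨⟨i, rfl⟩, hz⟩; exact ⟨i, hz, rfl⟩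
      · rintro ⟨i, hi, rfl⟩; exact ⟨⟨i, rfl⟩, hi⟩
    have hIfin : I.Finite := by
      have hsub : I ⊆ (fun i : ℤ => a + i • b) ⁻¹' (MAPN N a b) := by
        intro i hi
        rw [himg]
        exact ⟨i, hi, rfl⟩
      exact ((hMfin.preimage hinj.injOn)).subset hsub
    have hIcard : n ≤ I.ncard := by
      rwa [himg, Set.ncard_image_of_injective _ hinj] at hcard
    obtain ⟨i1, hi1, i2, hi2, hdiff⟩ := spread_lemma hIfin hIcard (by omega)
    rw [Finset.mem_coe, Fintype.mem_piFinset]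
    intro j
    rw [Finset.mem_Icc]
    have h1 := hi1 j
    have h2 := hi2 j
    simp only [Pi.add_apply, Pi.smul_apply, smul_eq_mul] at h1 h2
    have habs : ((n:ℤ) - 1) * |b j| ≤ N j - 1 := by
      have e1 : ((n:ℤ) - 1) * |b j| ≤ (i2 - i1) * |b j| :=
        mul_le_mul_of_nonneg_right hdiff (abs_nonneg _)
      have e2 : (i2 - i1) * |b j| ≤ |(i2 - i1) * b j| := by
        rw [abs_mul]
        exact mul_le_mul_of_nonneg_right (le_abs_self _) (abs_nonneg _)
      have e3 : |(i2 - i1) * b j| ≤ N j - 1 := by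
        have heq : (i2 - i1) * b j = (a j + i2 * b j) - (a j + i1 * b j) := by ring
        rw [heq, abs_le]
        omega
      omega
    have hbj : |b j| ≤ m j := by
      rw [hm]
      rw [Int.le_ediv_iff_mul_le (by omega)]
      linarith [habs]
    rw [abs_le] at hbj
    exact hbj
  calc ({b : Fin d → ℤ | ∃ a : Fin d → ℤ, s ≤ ((MAPN N a b).ncard : ℝ)}.ncard : ℝ)
      ≤ ((Fintype.piFinset fun j => Finset.Icc (-(m j)) (m j)).card : ℝ) := by
        have := Set.ncard_le_ncard hkey (Finset.finite_toSet _)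
        rw [Set.ncard_coe_finset] at this
        exact_mod_cast this
    _ = ∏ j, ((2 * m j + 1 : ℤ) : ℝ) := by
        rw [Fintype.card_piFinset, Nat.cast_prod]
        apply Finset.prod_congr rfl
        intro j _
        rw [Int.card_Icc]
        have heq : m j + 1 - -m j = 2 * m j + 1 := by ring
        rw [heq]
        have hnn : (0:ℤ) ≤ 2 * m j + 1 := by have := hm0 j; omega
        have hcast : ((2 * m j + 1).toNat : ℤ) = 2 * m j + 1 := Int.toNat_of_nonneg hnn
        calc ((2 * m j + 1).toNat : ℝ) = (((2 * m j + 1).toNat : ℤ) : ℝ) := by push_cast; ring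
          _ = ((2 * m j + 1 : ℤ) : ℝ) := by rw [hcast]
    _ ≤ ∏ i, (4 * (N i : ℝ) / s + 1) := by
        apply Finset.prod_le_prod
        · intro j _
          have hmr : (0:ℝ) ≤ (m j : ℝ) := by exact_mod_cast hm0 j
          push_cast
          linarith
        · intro j _
          have hNj : (1:ℝ) < (N j : ℝ) := by exact_mod_cast hN j
          have hn1 : (0:ℝ) < (n:ℝ) - 1 := by
            have h2n : ((2:ℕ):ℝ) ≤ (n:ℝ) := by exact_mod_cast hn2
            push_cast at h2n
            linarith
          have hmj : (m j : ℝ) ≤ ((N j : ℝ) - 1) / ((n:ℝ) - 1) := by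
            rw [le_div_iff₀ (by linarith)]
            have hd := Int.ediv_mul_le (N j - 1) (b := (n:ℤ) - 1) (by omega)
            exact_mod_cast hd
          have hstep : ((N j : ℝ) - 1) / ((n:ℝ) - 1) ≤ (N j : ℝ) / (s / 2) := by
            apply div_le_div₀ (by linarith) (by linarith) (by linarith)
            linarith
          have heq : (2:ℝ) * ((N j : ℝ) / (s / 2)) = 4 * (N j : ℝ) / s := by
            field_simp
            ring
          push_cast
          linarith
end

section
/- Let d be a positive integer and N = (N_1, …, N_d) with each N_i an integer greater than 1. Let M_N := {MAP_N(a, b) : a, b ∈ ℤ^d} be the set system of all maximal arithmetic progressions in Ω_N. Then there is a constant C_d depending only on d such that γ₂(M_N) ≤ C_d · f(N). -/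
open scoped Pointwise BigOperators

section MyAux
variable {d : ℕ}

lemma my_mapn_subset (N a b : Fin d → ℤ) : MAPN N a b ⊆ OmegaN N :=
  Set.inter_subset_right

lemma my_mapn_self {N x : Fin d → ℤ} (b : Fin d → ℤ) (hx : x ∈ OmegaN N) :
    x ∈ MAPN N x b := ⟨⟨0, by simp⟩, hx⟩

lemma my_mapn_eq_of_mem {N a b x : Fin d → ℤ} (hx : x ∈ MAPN N a b) :
    MAPN N x b = MAPN N a b := by
  obtain ⟨⟨i0, hi0⟩, hxΩ⟩ := hx
  ext z
  constructor
  · rintro ⟨⟨j, rfl⟩, hz⟩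
    exact ⟨⟨i0 + j, by rw [hi0, add_smul, add_assoc]⟩, hz⟩
  · rintro ⟨⟨j, rfl⟩, hz⟩
    refine ⟨⟨j - i0, ?_⟩, hz⟩
    rw [hi0, add_assoc, ← add_smul]
    have : i0 + (j - i0) = j := by ring
    rw [this]

lemma my_omega_finite (N : Fin d → ℤ) : (OmegaN N).Finite := by
  have hsub : OmegaN N ⊆ Set.pi Set.univ (fun i => Set.Icc 1 (N i)) := by
    intro x hx i _
    exact ⟨(hx i).1, (hx i).2⟩
  exact (Set.Finite.pi fun i => Set.finite_Icc _ _).subset hsub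

lemma my_mapn_b_bound {N a b : Fin d → ℤ} {ℓ : ℕ} (hl : 1 ≤ ℓ)
    (hcard : ℓ + 1 ≤ (MAPN N a b).ncard) : ∀ j, (ℓ : ℤ) * |b j| ≤ N j - 1 := by
  classical
  have hfin : (MAPN N a b).Finite := (my_omega_finite N).subset (my_mapn_subset N a b)
  by_cases hb : b = 0
  · exfalso
    have hsub : MAPN N a b ⊆ {a} := by
      rintro z ⟨⟨i, rfl⟩, -⟩
      simp [hb]
    have := Set.ncard_le_ncard hsub (Set.finite_singleton a)
    simp [Set.ncard_singleton] at this
    omega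
  · obtain ⟨j₀, hj₀⟩ := Function.ne_iff.mp hb
    set T : Set ℤ := {i : ℤ | a + i • b ∈ OmegaN N} with hT
    have hinj : Function.Injective (fun i : ℤ => a + i • b) := by
      intro i i' h
      have h2 : a j₀ + i * b j₀ = a j₀ + i' * b j₀ := by
        have := congrFun h j₀
        simpa using this
      have := add_left_cancel h2
      exact mul_right_cancel₀ hj₀ this
    have hTS : MAPN N a b = (fun i : ℤ => a + i • b) '' T := by
      ext z
      constructor
      · rintro ⟨⟨i, rfl⟩, hz⟩
        exact ⟨i, hz, rfl⟩
      · rintro ⟨i, hi, rfl⟩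
        exact ⟨⟨i, rfl⟩, hi⟩
    have hTfin : T.Finite := by
      apply Set.Finite.of_finite_image _ (hinj.injOn)
      rw [← hTS]; exact hfin
    have hTcard : ℓ + 1 ≤ T.ncard := by
      rwa [hTS, Set.ncard_image_of_injective T hinj] at hcard
    set Tf := hTfin.toFinset with hTf
    have hTfcard : T.ncard = Tf.card := Set.ncard_eq_toFinset_card T hTfin
    have hne : Tf.Nonempty := by
      rw [← Finset.card_pos]
      omega
    set i1 := Tf.min' hne with hi1
    set i2 := Tf.max' hne with hi2
    have hsub : Tf ⊆ Finset.Icc i1 i2 := by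
      intro i hi
      exact Finset.mem_Icc.mpr ⟨Tf.min'_le i hi, Tf.le_max' i hi⟩
    have hcard2 : Tf.card ≤ (i2 + 1 - i1).toNat := by
      have := Finset.card_le_card hsub
      rwa [Int.card_Icc] at this
    have hgap : (ℓ : ℤ) ≤ i2 - i1 := by omega
    have hmem1 : a + i1 • b ∈ OmegaN N := hTfin.mem_toFinset.mp (Tf.min'_mem hne)
    have hmem2 : a + i2 • b ∈ OmegaN N := hTfin.mem_toFinset.mp (Tf.max'_mem hne)
    intro j
    have h1 := hmem1 j
    have h2 := hmem2 j
    simp only [Pi.add_apply, Pi.smul_apply, smul_eq_mul] at h1 h2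
    have key : (i2 - i1) * b j = (a j + i2 * b j) - (a j + i1 * b j) := by ring
    have habs : |(i2 - i1) * b j| ≤ N j - 1 := by
      rw [key, abs_le]
      omega
    calc (ℓ : ℤ) * |b j| ≤ (i2 - i1) * |b j| :=
          mul_le_mul_of_nonneg_right hgap (abs_nonneg _)
      _ = |(i2 - i1) * b j| := by
          rw [abs_mul, abs_of_nonneg (by omega : (0:ℤ) ≤ i2 - i1)]
      _ ≤ N j - 1 := habs

lemma my_sum_ind {β : Type*} (Ωf : Finset β) (S : Set β) [DecidablePred (· ∈ S)]
    (hS : ∀ y ∈ S, y ∈ Ωf) :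
    ∑ y ∈ Ωf, (if y ∈ S then (1:ℝ) else 0) = S.ncard := by
  rw [Finset.sum_boole]
  congr 1
  have hset : (↑(Ωf.filter (· ∈ S)) : Set β) = S := by
    ext y
    simp only [Finset.coe_filter, Set.mem_setOf_eq]
    exact ⟨fun h => h.2, fun h => ⟨hS y h, h⟩⟩
  rw [← Set.ncard_coe_finset, hset]

end MyAux

section MyAux2
variable {d : ℕ}

lemma my_fvec_bdd (N : Fin d → ℤ) :
    BddAbove (Set.range fun I : Finset (Fin d) =>
      (∏ i ∈ I, (N i : ℝ)) ^ ((1 : ℝ) / (2 * (I.card : ℝ) + 2))) :=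
  (Set.finite_range _).bddAbove

lemma my_fvec_one_le (N : Fin d → ℤ) : 1 ≤ fVec N := by
  have h := le_ciSup (my_fvec_bdd N) (∅ : Finset (Fin d))
  simp only [Finset.prod_empty, Finset.card_empty, Nat.cast_zero, Real.one_rpow] at h
  exact h

lemma my_fvec_prod_le (N : Fin d → ℤ) (hN : ∀ i, 1 < N i) (I : Finset (Fin d)) :
    ∏ i ∈ I, (N i : ℝ) ≤ fVec N ^ (2 * I.card + 2) := by
  have hP0 : (0:ℝ) ≤ ∏ i ∈ I, (N i : ℝ) :=
    Finset.prod_nonneg fun i _ => by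
      have := hN i
      exact_mod_cast (by omega : (0:ℤ) ≤ N i)
  have he : (0:ℝ) < 2 * (I.card : ℝ) + 2 := by
    have : (0:ℝ) ≤ (I.card : ℝ) := Nat.cast_nonneg _
    linarith
  have hle := le_ciSup (my_fvec_bdd N) I
  calc ∏ i ∈ I, (N i : ℝ)
      = ((∏ i ∈ I, (N i : ℝ)) ^ ((1:ℝ) / (2 * (I.card : ℝ) + 2))) ^ (2 * (I.card : ℝ) + 2) := by
        rw [← Real.rpow_mul hP0, one_div_mul_cancel he.ne', Real.rpow_one]
    _ ≤ (fVec N) ^ (2 * (I.card : ℝ) + 2) :=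
        Real.rpow_le_rpow (Real.rpow_nonneg hP0 _) hle he.le
    _ = fVec N ^ (2 * I.card + 2) := by
        rw [← Real.rpow_natCast (fVec N) (2 * I.card + 2)]
        congr 1
        push_cast
        ring

lemma my_card_bound (N : Fin d → ℤ) (hN : ∀ i, 1 < N i) (l0 : ℕ) (hl01 : 1 ≤ l0)
    (hl0F : fVec N ^ 2 ≤ (l0 : ℝ)) :
    (((Fintype.piFinset fun j => Finset.Icc (-((N j - 1) / (l0 : ℤ))) ((N j - 1) / (l0 : ℤ))).card : ℕ) : ℝ)
      ≤ 3 ^ d * fVec N ^ 2 := by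
  classical
  set F := fVec N with hF
  have hF1 : 1 ≤ F := my_fvec_one_le N
  have hl0pos : (0:ℝ) < (l0 : ℝ) := by positivity
  have hl0posZ : (0:ℤ) < (l0 : ℤ) := by exact_mod_cast hl01
  set m : Fin d → ℤ := fun j => (N j - 1) / (l0 : ℤ) with hm
  have hm0 : ∀ j, 0 ≤ m j := fun j =>
    Int.ediv_nonneg (by have := hN j; omega) (by positivity)
  have hcard : (Fintype.piFinset fun j => Finset.Icc (-(m j)) (m j)).card
      = ∏ j, (2 * m j + 1).toNat := by
    rw [Fintype.card_piFinset]
    congr 1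
    funext j
    rw [Int.card_Icc]
    congr 1
    ring
  rw [hcard]
  push_cast
  have hfac : ∀ j, ((2 * m j + 1).toNat : ℝ) ≤ 2 * (N j : ℝ) / (l0:ℝ) + 1 := by
    intro j
    have h0 := hm0 j
    have h2 : (((2 * m j + 1).toNat : ℤ) : ℝ) = 2 * (m j : ℝ) + 1 := by
      rw [Int.toNat_of_nonneg (by omega)]
      push_cast
      ring
    have h3 : ((2 * m j + 1).toNat : ℝ) = 2 * (m j : ℝ) + 1 := by
      exact_mod_cast h2
    rw [h3]
    have h4 : 2 * (N j : ℝ) / (l0:ℝ) = 2 * ((N j : ℝ) / (l0:ℝ)) := by ring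
    have hdiv : m j * (l0 : ℤ) ≤ N j - 1 := (Int.le_ediv_iff_mul_le hl0posZ).mp le_rfl
    have hdivR : (m j : ℝ) * (l0 : ℝ) ≤ (N j : ℝ) - 1 := by exact_mod_cast hdiv
    have : (m j : ℝ) ≤ (N j : ℝ) / (l0 : ℝ) := by
      rw [le_div_iff₀ hl0pos]
      have hNj : (1:ℝ) ≤ (N j : ℝ) := by exact_mod_cast (hN j).le
      nlinarith
    rw [h4]
    linarith
  have hprodle : (∏ j, ((2 * m j + 1).toNat : ℝ)) ≤ ∏ j, (2 * (N j : ℝ) / (l0:ℝ) + 1) :=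
    Finset.prod_le_prod (fun j _ => by positivity) (fun j _ => hfac j)
  refine le_trans hprodle ?_
  rw [Finset.prod_add]
  have hterm : ∀ t ∈ Finset.univ.powerset,
      (∏ j ∈ t, 2 * (N j : ℝ) / (l0:ℝ)) * ∏ j ∈ Finset.univ \ t, (1:ℝ)
        ≤ 2 ^ t.card * F ^ 2 := by
    intro t _
    rw [Finset.prod_const_one, mul_one]
    have : ∏ j ∈ t, 2 * (N j : ℝ) / (l0:ℝ)
        = (2 ^ t.card * ∏ j ∈ t, (N j : ℝ)) / (l0:ℝ) ^ t.card := by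
      rw [Finset.prod_div_distrib, Finset.prod_mul_distrib, Finset.prod_const, Finset.prod_const]
    rw [this, div_le_iff₀ (by positivity)]
    have hprod : ∏ j ∈ t, (N j : ℝ) ≤ F ^ 2 * (l0:ℝ) ^ t.card := by
      calc ∏ j ∈ t, (N j : ℝ) ≤ F ^ (2 * t.card + 2) := my_fvec_prod_le N hN t
        _ = F ^ 2 * (F ^ 2) ^ t.card := by rw [← pow_mul, ← pow_add]; ring_nf
        _ ≤ F ^ 2 * (l0:ℝ) ^ t.card := by
            refine mul_le_mul_of_nonneg_left ?_ (by positivity)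
            exact pow_le_pow_left₀ (by positivity) hl0F t.card
    nlinarith [pow_nonneg (show (0:ℝ) ≤ 2 by norm_num) t.card, hprod]
  calc ∑ t ∈ Finset.univ.powerset, ((∏ j ∈ t, 2 * (N j : ℝ) / (l0:ℝ)) * ∏ j ∈ Finset.univ \ t, (1:ℝ))
      ≤ ∑ t ∈ Finset.univ.powerset, 2 ^ t.card * F ^ 2 := Finset.sum_le_sum hterm
    _ = (∑ t ∈ Finset.univ.powerset, (2:ℝ) ^ t.card) * F ^ 2 := by rw [Finset.sum_mul]
    _ = 3 ^ d * F ^ 2 := by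
        congr 1
        have h := Finset.prod_add (fun _ : Fin d => (2:ℝ)) (fun _ => 1) Finset.univ
        simp only [Finset.prod_const, Finset.prod_const_one, one_pow, mul_one,
          Finset.card_univ, Fintype.card_fin] at h
        rw [← h]
        norm_num

end MyAux2


lemma my_mapn_disjoint {d : ℕ} {N a b x : Fin d → ℤ} (hxΩ : x ∈ OmegaN N)
    (hx : x ∉ MAPN N a b) {y : Fin d → ℤ} (hy : y ∈ MAPN N a b)
    (hy2 : y ∈ MAPN N x b) : False := by
  have h1 := my_mapn_eq_of_mem hy
  have h2 := my_mapn_eq_of_mem hy2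
  apply hx
  rw [← h1, h2]
  exact my_mapn_self b hxΩ

theorem my_key (d : ℕ) (N : Fin d → ℤ) (hN : ∀ i, 1 < N i) :
    gamma2S (OmegaN N) {S | ∃ a b : Fin d → ℤ, S = MAPN N a b} ≤
      Real.sqrt (2 + 3 ^ d) * fVec N := by
  classical
  set F := fVec N with hFdef
  have hF1 : 1 ≤ F := my_fvec_one_le N
  have hF0 : (0:ℝ) < F := lt_of_lt_of_le one_pos hF1
  set l0 : ℕ := ⌈F ^ 2⌉₊ with hl0def
  have hl0F : F ^ 2 ≤ (l0 : ℝ) := Nat.le_ceil _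
  have hl01 : 1 ≤ l0 := by
    rw [hl0def, Nat.one_le_ceil_iff]
    positivity
  have hl0R1 : (1:ℝ) ≤ (l0:ℝ) := by exact_mod_cast hl01
  have hl0pos : (0:ℝ) < (l0:ℝ) := by linarith
  have hl0le : (l0 : ℝ) ≤ 2 * F ^ 2 := by
    have h := Nat.ceil_lt_add_one (show (0:ℝ) ≤ F ^ 2 by positivity)
    have h2 : (1:ℝ) ≤ F ^ 2 := by nlinarith
    rw [hl0def]
    linarith
  set lam : ℝ := Real.sqrt (l0 : ℝ) with hlam
  have hlam_sq : lam ^ 2 = (l0:ℝ) := Real.sq_sqrt hl0pos.le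
  have hlam_pos : 0 < lam := Real.sqrt_pos.mpr hl0pos
  have hΩfin : (OmegaN N).Finite := my_omega_finite N
  obtain ⟨Ωf, hmemΩf⟩ : ∃ Ωf : Finset (Fin d → ℤ), ∀ y, y ∈ Ωf ↔ y ∈ OmegaN N :=
    ⟨hΩfin.toFinset, fun y => hΩfin.mem_toFinset⟩
  have hone : (fun _ => 1 : Fin d → ℤ) ∈ OmegaN N := fun i => ⟨le_refl 1, (hN i).le⟩
  haveI hΩne : Nonempty ↥(OmegaN N) := ⟨⟨_, hone⟩⟩
  set 𝒮 : Set (Set (Fin d → ℤ)) := {S | ∃ a b : Fin d → ℤ, S = MAPN N a b} with h𝒮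
  haveI h𝒮ne : Nonempty ↥𝒮 := ⟨⟨MAPN N 0 0, by rw [h𝒮]; exact ⟨0, 0, rfl⟩⟩⟩
  have hex : ∀ S : ↥𝒮, ∃ a b : Fin d → ℤ, (S : Set (Fin d → ℤ)) = MAPN N a b :=
    fun S => S.2
  choose aS bS habS using hex
  set m : Fin d → ℤ := fun j => (N j - 1) / (l0 : ℤ) with hm
  obtain ⟨B, hBmem, hBcard⟩ : ∃ B : Finset (Fin d → ℤ),
      (∀ b : Fin d → ℤ, b ∈ B ↔ ∀ j, |b j| ≤ m j) ∧ (B.card : ℝ) ≤ 3 ^ d * F ^ 2 := by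
    refine ⟨Fintype.piFinset fun j => Finset.Icc (-(m j)) (m j), ?_, ?_⟩
    · intro b
      rw [Fintype.mem_piFinset]
      constructor
      · intro h j
        have := h j
        rwa [Finset.mem_Icc, ← abs_le] at this
      · intro h j
        rw [Finset.mem_Icc, ← abs_le]
        exact h j
    · have h := my_card_bound N hN l0 hl01 hl0F
      simp only [hm]
      rw [hFdef]
      exact_mod_cast h
  set lng : ↥𝒮 → Prop := fun S => l0 + 1 ≤ (S : Set (Fin d → ℤ)).ncard with hlng
  have hbSB : ∀ S : ↥𝒮, lng S → bS S ∈ B := by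
    intro S hS
    have hcard : l0 + 1 ≤ (MAPN N (aS S) (bS S)).ncard := by
      rw [← habS S]
      rw [hlng] at hS
      exact hS
    have hb := my_mapn_b_bound hl01 hcard
    rw [hBmem]
    intro j
    have hl0posZ : (0:ℤ) < (l0:ℤ) := by exact_mod_cast hl01
    rw [hm]
    rw [Int.le_ediv_iff_mul_le hl0posZ]
    calc |bS S j| * (l0:ℤ) = (l0:ℤ) * |bS S j| := by ring
      _ ≤ N j - 1 := hb j
  set E := (Fintype.equivFin ((↥B × ↥Ωf) ⊕ ↥Ωf)).symm with hE
  set Llong : ↥𝒮 → (Fin d → ℤ) → (Fin d → ℤ) → ℝ := fun S b y =>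
    if lng S ∧ b = bS S ∧ y ∈ (S : Set (Fin d → ℤ)) then
      lam / Real.sqrt ((S : Set (Fin d → ℤ)).ncard) else 0 with hLlong
  set Lshort : ↥𝒮 → (Fin d → ℤ) → ℝ := fun S y =>
    if ¬ lng S ∧ y ∈ (S : Set (Fin d → ℤ)) then 1 else 0 with hLshort
  set Rlong : (Fin d → ℤ) → (Fin d → ℤ) → ↥(OmegaN N) → ℝ := fun b y x =>
    if y ∈ MAPN N (x : Fin d → ℤ) b then
      1 / (lam * Real.sqrt ((MAPN N (x : Fin d → ℤ) b).ncard)) else 0 with hRlong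
  set Rshort : (Fin d → ℤ) → ↥(OmegaN N) → ℝ := fun y x =>
    if y = (x : Fin d → ℤ) then 1 else 0 with hRshort
  set L : ↥𝒮 → Fin (Fintype.card ((↥B × ↥Ωf) ⊕ ↥Ωf)) → ℝ := fun S t =>
    Sum.elim (fun p : ↥B × ↥Ωf => Llong S (p.1 : Fin d → ℤ) (p.2 : Fin d → ℤ))
      (fun y : ↥Ωf => Lshort S (y : Fin d → ℤ)) (E t) with hL
  set R : Fin (Fintype.card ((↥B × ↥Ωf) ⊕ ↥Ωf)) → ↥(OmegaN N) → ℝ := fun t x =>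
    Sum.elim (fun p : ↥B × ↥Ωf => Rlong (p.1 : Fin d → ℤ) (p.2 : Fin d → ℤ) x)
      (fun y : ↥Ωf => Rshort (y : Fin d → ℤ) x) (E t) with hR
  have hred : ∀ (g : (Fin d → ℤ) → (Fin d → ℤ) → ℝ) (h : (Fin d → ℤ) → ℝ),
      (∑ t : Fin (Fintype.card ((↥B × ↥Ωf) ⊕ ↥Ωf)),
        Sum.elim (fun p : ↥B × ↥Ωf => g (p.1 : Fin d → ℤ) (p.2 : Fin d → ℤ))
          (fun y : ↥Ωf => h (y : Fin d → ℤ)) (E t))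
        = (∑ b ∈ B, ∑ y ∈ Ωf, g b y) + ∑ y ∈ Ωf, h y := by
    intro g h
    rw [Equiv.sum_comp E]
    rw [Fintype.sum_sum_type]
    congr 1
    · calc ∑ p : ↥B × ↥Ωf, g (p.1 : Fin d → ℤ) (p.2 : Fin d → ℤ)
          = ∑ b : ↥B, ∑ y : ↥Ωf, g (b : Fin d → ℤ) (y : Fin d → ℤ) := Fintype.sum_prod_type _
        _ = ∑ b : ↥B, ∑ y ∈ Ωf, g (b : Fin d → ℤ) y := by
            refine Finset.sum_congr rfl fun b _ => ?_
            exact Finset.sum_coe_sort Ωf (g (b : Fin d → ℤ))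
        _ = ∑ b ∈ B, ∑ y ∈ Ωf, g b y := Finset.sum_coe_sort B (fun b => ∑ y ∈ Ωf, g b y)
    · exact Finset.sum_coe_sort Ωf h
  have helim_mul : ∀ (f1 : ↥B × ↥Ωf → ℝ) (g1 : ↥Ωf → ℝ) (f2 : ↥B × ↥Ωf → ℝ) (g2 : ↥Ωf → ℝ)
      (i : (↥B × ↥Ωf) ⊕ ↥Ωf),
      Sum.elim f1 g1 i * Sum.elim f2 g2 i
        = Sum.elim (fun p => f1 p * f2 p) (fun y => g1 y * g2 y) i := by
    rintro f1 g1 f2 g2 (p | y) <;> rfl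
  have helim_sq : ∀ (f : ↥B × ↥Ωf → ℝ) (g : ↥Ωf → ℝ) (i : (↥B × ↥Ωf) ⊕ ↥Ωf),
      Sum.elim f g i ^ 2 = Sum.elim (fun p => f p ^ 2) (fun y => g y ^ 2) i := by
    rintro f g (p | y) <;> rfl
  have hSsubΩ : ∀ S : ↥𝒮, (S : Set (Fin d → ℤ)) ⊆ OmegaN N := by
    intro S
    rw [habS S]
    exact my_mapn_subset N _ _
  have hsum_c : ∀ (S : Set (Fin d → ℤ)), S ⊆ OmegaN N → ∀ c : ℝ,
      (∑ y ∈ Ωf, if y ∈ S then c else 0) = c * S.ncard := by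
    intro S hSsub c
    calc (∑ y ∈ Ωf, if y ∈ S then c else 0)
        = ∑ y ∈ Ωf, c * (if y ∈ S then (1:ℝ) else 0) := by
          refine Finset.sum_congr rfl fun y _ => ?_
          split_ifs <;> ring
      _ = c * ∑ y ∈ Ωf, (if y ∈ S then (1:ℝ) else 0) := by rw [Finset.mul_sum]
      _ = c * S.ncard := by rw [my_sum_ind Ωf S (fun y hy => (hmemΩf y).mpr (hSsub hy))]
  -- row norms
  have hrow : ∀ S : ↥𝒮, (∑ t, L S t ^ 2) ≤ (l0:ℝ) := by
    intro S
    have hsplit : (∑ t, L S t ^ 2)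
        = (∑ b ∈ B, ∑ y ∈ Ωf, Llong S b y ^ 2) + ∑ y ∈ Ωf, Lshort S y ^ 2 := by
      simp only [hL]
      exact (Finset.sum_congr rfl fun t _ => helim_sq _ _ _).trans
        (hred (fun b y => Llong S b y ^ 2) (fun y => Lshort S y ^ 2))
    rw [hsplit]
    by_cases hlo : lng S
    · have hshort0 : ∑ y ∈ Ωf, Lshort S y ^ 2 = 0 := by
        refine Finset.sum_eq_zero fun y _ => ?_
        simp only [hLshort]
        rw [if_neg (fun hc => hc.1 hlo)]
        norm_num
      have hnpos : (0:ℝ) < ((S : Set (Fin d → ℤ)).ncard : ℝ) := by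
        rw [hlng] at hlo
        have : 0 < (S : Set (Fin d → ℤ)).ncard := by omega
        exact_mod_cast this
      have hlong : ∑ b ∈ B, ∑ y ∈ Ωf, Llong S b y ^ 2 = (l0:ℝ) := by
        rw [Finset.sum_eq_single_of_mem (bS S) (hbSB S hlo)]
        · have hstep : ∀ y ∈ Ωf, Llong S (bS S) y ^ 2
              = if y ∈ (S : Set (Fin d → ℤ)) then (l0:ℝ)/((S : Set (Fin d → ℤ)).ncard : ℝ) else 0 := by
            intro y _
            simp only [hLlong]
            split_ifs with h1 h2 h3
            · rw [div_pow, hlam_sq, Real.sq_sqrt (Nat.cast_nonneg _)]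
            · exact absurd h1.2.2 h2
            · exact absurd ⟨hlo, by trivial, h3⟩ h1
            · norm_num
          rw [Finset.sum_congr rfl hstep, hsum_c _ (hSsubΩ S) _]
          exact div_mul_cancel₀ _ (ne_of_gt hnpos)
        · intro b _ hne
          refine Finset.sum_eq_zero fun y _ => ?_
          simp only [hLlong]
          rw [if_neg (fun hc => hne hc.2.1)]
          norm_num
      rw [hshort0, hlong, add_zero]
    · have hlong0 : ∑ b ∈ B, ∑ y ∈ Ωf, Llong S b y ^ 2 = 0 := by
        refine Finset.sum_eq_zero fun b _ => Finset.sum_eq_zero fun y _ => ?_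
        simp only [hLlong]
        rw [if_neg (fun hc => hlo hc.1)]
        norm_num
      have hshort : ∑ y ∈ Ωf, Lshort S y ^ 2 = ((S : Set (Fin d → ℤ)).ncard : ℝ) := by
        have hstep : ∀ y ∈ Ωf, Lshort S y ^ 2
            = if y ∈ (S : Set (Fin d → ℤ)) then (1:ℝ) else 0 := by
          intro y _
          simp only [hLshort]
          by_cases hy : y ∈ (S : Set (Fin d → ℤ))
          · rw [if_pos ⟨hlo, hy⟩, if_pos hy]
            norm_num
          · rw [if_neg (fun hc => hy hc.2), if_neg hy]
            norm_num
        rw [Finset.sum_congr rfl hstep, hsum_c _ (hSsubΩ S) 1, one_mul]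
      rw [hlong0, hshort, zero_add]
      rw [hlng] at hlo
      have : (S : Set (Fin d → ℤ)).ncard ≤ l0 := by omega
      exact_mod_cast this
  -- column norms
  have hcol : ∀ x : ↥(OmegaN N), (∑ t, R t x ^ 2) = (B.card : ℝ) / (l0:ℝ) + 1 := by
    intro x
    have hsplit : (∑ t, R t x ^ 2)
        = (∑ b ∈ B, ∑ y ∈ Ωf, Rlong b y x ^ 2) + ∑ y ∈ Ωf, Rshort y x ^ 2 := by
      simp only [hR]
      exact (Finset.sum_congr rfl fun t _ => helim_sq _ _ _).trans
        (hred (fun b y => Rlong b y x ^ 2) (fun y => Rshort y x ^ 2))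
    rw [hsplit]
    have hlongpart : ∀ b ∈ B, ∑ y ∈ Ωf, Rlong b y x ^ 2 = 1 / (l0:ℝ) := by
      intro b _
      have hfinb : (MAPN N (x : Fin d → ℤ) b).Finite := hΩfin.subset (my_mapn_subset N _ _)
      have hnpos : (0:ℝ) < ((MAPN N (x : Fin d → ℤ) b).ncard : ℝ) := by
        have : 0 < (MAPN N (x : Fin d → ℤ) b).ncard :=
          (Set.ncard_pos hfinb).mpr ⟨_, my_mapn_self b x.2⟩
        exact_mod_cast this
      have hstep : ∀ y ∈ Ωf, Rlong b y x ^ 2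
          = if y ∈ MAPN N (x : Fin d → ℤ) b then
              1/((l0:ℝ) * ((MAPN N (x : Fin d → ℤ) b).ncard : ℝ)) else 0 := by
        intro y _
        simp only [hRlong]
        by_cases hy : y ∈ MAPN N (x : Fin d → ℤ) b
        · rw [if_pos hy, if_pos hy, div_pow, mul_pow, hlam_sq,
            Real.sq_sqrt (Nat.cast_nonneg _)]
          norm_num
        · rw [if_neg hy, if_neg hy]
          norm_num
      rw [Finset.sum_congr rfl hstep, hsum_c _ (my_mapn_subset N _ _) _]
      field_simp
    rw [Finset.sum_congr rfl hlongpart, Finset.sum_const, nsmul_eq_mul]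
    have hshortpart : ∑ y ∈ Ωf, Rshort y x ^ 2 = 1 := by
      have hxin : (x : Fin d → ℤ) ∈ Ωf := (hmemΩf _).mpr x.2
      rw [Finset.sum_eq_single_of_mem (x : Fin d → ℤ) hxin]
      · simp [hRshort]
      · intro y _ hy
        simp [hRshort, hy]
    rw [hshortpart]
    ring
  -- the factorization identity
  have hid : ∀ (S : ↥𝒮) (x : ↥(OmegaN N)),
      (∑ t, L S t * R t x)
        = Set.indicator (S : Set (Fin d → ℤ)) (fun _ => (1:ℝ)) (x : Fin d → ℤ) := by
    intro S x
    have hsplit : (∑ t, L S t * R t x)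
        = (∑ b ∈ B, ∑ y ∈ Ωf, Llong S b y * Rlong b y x)
          + ∑ y ∈ Ωf, Lshort S y * Rshort y x := by
      simp only [hL, hR]
      exact (Finset.sum_congr rfl fun t _ => helim_mul _ _ _ _ _).trans
        (hred (fun b y => Llong S b y * Rlong b y x) (fun y => Lshort S y * Rshort y x))
    rw [hsplit, Set.indicator_apply]
    by_cases hlo : lng S
    · have hshort0 : ∑ y ∈ Ωf, Lshort S y * Rshort y x = 0 := by
        refine Finset.sum_eq_zero fun y _ => ?_
        simp only [hLshort]
        rw [if_neg (fun hc => hc.1 hlo), zero_mul]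
      rw [hshort0, add_zero]
      have hz0 : ∀ b ∈ B, b ≠ bS S → ∑ y ∈ Ωf, Llong S b y * Rlong b y x = 0 := by
        intro b _ hne
        refine Finset.sum_eq_zero fun y _ => ?_
        simp only [hLlong]
        rw [if_neg (fun hc => hne hc.2.1), zero_mul]
      rw [Finset.sum_eq_single_of_mem (bS S) (hbSB S hlo) hz0]
      by_cases hx : (x : Fin d → ℤ) ∈ (S : Set (Fin d → ℤ))
      · have hclass : MAPN N (x : Fin d → ℤ) (bS S) = (S : Set (Fin d → ℤ)) := by
          rw [habS S] at hx ⊢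
          exact my_mapn_eq_of_mem hx
        have hnpos : (0:ℝ) < ((S : Set (Fin d → ℤ)).ncard : ℝ) := by
          rw [hlng] at hlo
          have : 0 < (S : Set (Fin d → ℤ)).ncard := by omega
          exact_mod_cast this
        have hsq : Real.sqrt ((S : Set (Fin d → ℤ)).ncard : ℝ)
            * Real.sqrt ((S : Set (Fin d → ℤ)).ncard : ℝ)
            = ((S : Set (Fin d → ℤ)).ncard : ℝ) := Real.mul_self_sqrt (Nat.cast_nonneg _)
        have hstep : ∀ y ∈ Ωf, Llong S (bS S) y * Rlong (bS S) y x
            = if y ∈ (S : Set (Fin d → ℤ)) then 1/((S : Set (Fin d → ℤ)).ncard : ℝ) else 0 := by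
          intro y _
          simp only [hLlong, hRlong, hclass]
          split_ifs with h1 h2 h3
          · rw [div_mul_div_comm, mul_one, mul_left_comm, hsq]
            rw [div_eq_div_iff (mul_pos hlam_pos hnpos).ne' hnpos.ne']
            ring
          · exact absurd h1.2.2 h2
          · exact absurd ⟨hlo, by trivial, h3⟩ h1
          · norm_num
        rw [Finset.sum_congr rfl hstep, hsum_c _ (hSsubΩ S) _, if_pos hx]
        field_simp
      · have hzero : ∀ y ∈ Ωf, Llong S (bS S) y * Rlong (bS S) y x = 0 := by
          intro y _
          simp only [hLlong, hRlong]
          by_cases hy : y ∈ (S : Set (Fin d → ℤ))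
          · have hyn : y ∉ MAPN N (x : Fin d → ℤ) (bS S) := by
              intro hy2
              have hx' : (x : Fin d → ℤ) ∉ MAPN N (aS S) (bS S) := by
                rw [← habS S]
                exact hx
              have hy' : y ∈ MAPN N (aS S) (bS S) := by
                rw [← habS S]
                exact hy
              exact my_mapn_disjoint x.2 hx' hy' hy2
            rw [if_neg hyn, mul_zero]
          · rw [if_neg (fun hc => hy hc.2.2), zero_mul]
        rw [Finset.sum_eq_zero hzero, if_neg hx]
    · have hlong0 : ∑ b ∈ B, ∑ y ∈ Ωf, Llong S b y * Rlong b y x = 0 := by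
        refine Finset.sum_eq_zero fun b _ => Finset.sum_eq_zero fun y _ => ?_
        simp only [hLlong]
        rw [if_neg (fun hc => hlo hc.1), zero_mul]
      rw [hlong0, zero_add]
      have hxin : (x : Fin d → ℤ) ∈ Ωf := (hmemΩf _).mpr x.2
      have hz : ∀ y ∈ Ωf, y ≠ (x : Fin d → ℤ) → Lshort S y * Rshort y x = 0 := by
        intro y _ hy
        simp only [hRshort]
        rw [if_neg hy, mul_zero]
      rw [Finset.sum_eq_single_of_mem (x : Fin d → ℤ) hxin hz]
      by_cases hx : (x : Fin d → ℤ) ∈ (S : Set (Fin d → ℤ))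
      · simp [hLshort, hRshort, hlo, hx]
      · simp [hLshort, hRshort, hx]
  -- conclude
  unfold gamma2S
  have hbdd : BddBelow {c : ℝ | ∃ (k : ℕ) (L' : ↥𝒮 → Fin k → ℝ) (R' : Fin k → ↥(OmegaN N) → ℝ),
      (∀ (S : ↥𝒮) (x : ↥(OmegaN N)), (∑ t, L' S t * R' t x)
          = Set.indicator (S : Set (Fin d → ℤ)) (fun _ => (1:ℝ)) (x : Fin d → ℤ)) ∧
      c = (⨆ S : ↥𝒮, Real.sqrt (∑ t, L' S t ^ 2))
        * (⨆ x : ↥(OmegaN N), Real.sqrt (∑ t, R' t x ^ 2))} := by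
    refine ⟨0, ?_⟩
    rintro c ⟨k, L', R', -, rfl⟩
    exact mul_nonneg (Real.iSup_nonneg fun S => Real.sqrt_nonneg _)
      (Real.iSup_nonneg fun x => Real.sqrt_nonneg _)
  have hmem : ((⨆ S : ↥𝒮, Real.sqrt (∑ t, L S t ^ 2))
        * (⨆ x : ↥(OmegaN N), Real.sqrt (∑ t, R t x ^ 2)))
      ∈ {c : ℝ | ∃ (k : ℕ) (L' : ↥𝒮 → Fin k → ℝ) (R' : Fin k → ↥(OmegaN N) → ℝ),
      (∀ (S : ↥𝒮) (x : ↥(OmegaN N)), (∑ t, L' S t * R' t x)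
          = Set.indicator (S : Set (Fin d → ℤ)) (fun _ => (1:ℝ)) (x : Fin d → ℤ)) ∧
      c = (⨆ S : ↥𝒮, Real.sqrt (∑ t, L' S t ^ 2))
        * (⨆ x : ↥(OmegaN N), Real.sqrt (∑ t, R' t x ^ 2))} :=
    ⟨Fintype.card ((↥B × ↥Ωf) ⊕ ↥Ωf), L, R, hid, rfl⟩
  refine le_trans (csInf_le hbdd hmem) ?_
  · have hsupL : (⨆ S : ↥𝒮, Real.sqrt (∑ t, L S t ^ 2)) ≤ lam := by
      refine ciSup_le fun S => ?_
      rw [hlam]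
      exact Real.sqrt_le_sqrt (hrow S)
    have hsupR : (⨆ x : ↥(OmegaN N), Real.sqrt (∑ t, R t x ^ 2))
        ≤ Real.sqrt ((B.card : ℝ) / (l0:ℝ) + 1) := by
      refine ciSup_le fun x => ?_
      rw [hcol x]
    have hprod := mul_le_mul hsupL hsupR
      (Real.iSup_nonneg fun x => Real.sqrt_nonneg _) hlam_pos.le
    refine le_trans hprod ?_
    rw [hlam, ← Real.sqrt_mul hl0pos.le]
    have heq : (l0:ℝ) * ((B.card : ℝ) / (l0:ℝ) + 1) = (B.card : ℝ) + (l0:ℝ) := by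
      field_simp
    rw [heq]
    have hsum : (B.card : ℝ) + (l0:ℝ) ≤ (2 + 3 ^ d) * F ^ 2 := by
      calc (B.card : ℝ) + (l0:ℝ) ≤ 3 ^ d * F ^ 2 + 2 * F ^ 2 := add_le_add hBcard hl0le
        _ = (2 + 3 ^ d) * F ^ 2 := by ring
    refine le_trans (Real.sqrt_le_sqrt hsum) ?_
    rw [Real.sqrt_mul (by positivity : (0:ℝ) ≤ 2 + 3 ^ d), Real.sqrt_sq hF0.le]

/-- γ₂ of the system of all maximal APs in Ω_N is at most C_d f(N). -/
theorem stmt9 (d : ℕ) (hd : 0 < d) :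
    ∃ C : ℝ, ∀ N : Fin d → ℤ, (∀ i, 1 < N i) →
      gamma2S (OmegaN N) {S | ∃ a b : Fin d → ℤ, S = MAPN N a b} ≤ C * fVec N := by
  exact ⟨Real.sqrt (2 + 3 ^ d), fun N hN => my_key d N hN⟩
end

section
/- Let K ⊆ ℝ^d be a convex body, and let M_K := {MAP_K(a, b) : a, b ∈ ℤ^d} be the set system of all maximal arithmetic progressions inside K. Then γ₂(M_K) ≤ √2 · f(K). -/
open scoped Pointwise BigOperators

lemma intPoints_finite {d : ℕ} {A : Set (Fin d → ℝ)} (hA : Bornology.IsBounded A) :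
    (intPoints A).Finite := by
  obtain ⟨r, hr⟩ := hA.subset_closedBall 0
  have h : intPoints A ⊆ Set.pi Set.univ (fun _ => Set.Icc (-⌈r⌉) ⌈r⌉) := by
    intro x hx
    have hxA : (fun i => (x i : ℝ)) ∈ Metric.closedBall 0 r := hr hx
    rw [Metric.mem_closedBall, dist_zero_right] at hxA
    intro i _
    have : |(x i : ℝ)| ≤ r := by
      calc |(x i : ℝ)| = ‖(x i : ℝ)‖ := (Real.norm_eq_abs _).symm
        _ ≤ ‖(fun i => (x i : ℝ))‖ := norm_le_pi_norm (fun i => (x i : ℝ)) i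
        _ ≤ r := hxA
    have h2 : |(x i : ℝ)| ≤ (⌈r⌉ : ℝ) := this.trans (Int.le_ceil r)
    rw [abs_le] at h2
    constructor
    · exact_mod_cast h2.1
    · exact_mod_cast h2.2
  exact (Set.Finite.pi (fun _ => Set.finite_Icc _ _)).subset h

lemma MAPK_subset {d : ℕ} (K : Set (Fin d → ℝ)) (a b : Fin d → ℤ) :
    MAPK K a b ⊆ intPoints K := Set.inter_subset_right

lemma mem_MAPK_self {d : ℕ} {K : Set (Fin d → ℝ)} {x : Fin d → ℤ} (hx : x ∈ intPoints K)
    (b : Fin d → ℤ) : x ∈ MAPK K x b :=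
  ⟨⟨0, by simp⟩, hx⟩

lemma MAPK_eq_of_mem {d : ℕ} {K : Set (Fin d → ℝ)} {a b x : Fin d → ℤ}
    (hx : x ∈ MAPK K a b) : MAPK K x b = MAPK K a b := by
  obtain ⟨⟨i0, rfl⟩, _⟩ := hx
  unfold MAPK
  congr 1
  ext z
  constructor
  · rintro ⟨i, rfl⟩; exact ⟨i0 + i, by rw [add_smul]; abel⟩
  · rintro ⟨i, rfl⟩; exact ⟨i - i0, by rw [sub_smul]; abel⟩

lemma mem_MAPK_symm {d : ℕ} {K : Set (Fin d → ℝ)} {b x y : Fin d → ℤ}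
    (hx : x ∈ intPoints K) (hy : y ∈ MAPK K x b) : x ∈ MAPK K y b := by
  obtain ⟨⟨i, rfl⟩, hyK⟩ := hy
  exact ⟨⟨-i, by simp⟩, hx⟩

lemma coe_add_zsmul {d : ℕ} (a b : Fin d → ℤ) (i : ℤ) :
    (fun j => (((a + i • b) j : ℤ) : ℝ)) =
      (fun j => ((a j : ℤ) : ℝ)) + (i : ℝ) • (fun j => ((b j : ℤ) : ℝ)) := by
  funext j
  simp only [Pi.add_apply, Pi.smul_apply, smul_eq_mul]
  push_cast
  ring

lemma long_diff_mem {d : ℕ} {K : Set (Fin d → ℝ)} (hc : Convex ℝ K)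
    {x₀ : Fin d → ℝ} (hx₀ : x₀ ∈ K) {a b : Fin d → ℤ} {s : ℝ} (hs1 : 1 ≤ s)
    (hfin : (MAPK K a b).Finite) (hlong : s + 1 ≤ ((MAPK K a b).ncard : ℝ)) :
    b ≠ 0 ∧ (fun j => ((b j : ℤ) : ℝ)) ∈ (1 / s) • (K - K) := by
  have hs0 : 0 < s := lt_of_lt_of_le one_pos hs1
  -- b ≠ 0
  have hb : b ≠ 0 := by
    rintro rfl
    have hsub : MAPK K a 0 ⊆ {a} := by
      rintro z ⟨⟨i, rfl⟩, _⟩; simp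
    have := Set.ncard_le_ncard hsub (Set.finite_singleton a)
    rw [Set.ncard_singleton] at this
    have : ((MAPK K a 0).ncard : ℝ) ≤ 1 := by exact_mod_cast this
    linarith
  -- index set
  set I : Set ℤ := {i | a + i • b ∈ intPoints K} with hI
  set φ : ℤ → (Fin d → ℤ) := fun i => a + i • b with hφ
  have hφinj : Function.Injective φ := by
    intro i j hij
    obtain ⟨k, hk⟩ : ∃ k, b k ≠ 0 := Function.ne_iff.mp hb
    have := congrFun hij k
    simp only [hφ, Pi.add_apply, Pi.smul_apply, smul_eq_mul] at this
    have : i * b k = j * b k := by linarith [this]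
    exact mul_right_cancel₀ hk this
  have hSeq : MAPK K a b = φ '' I := by
    ext z
    constructor
    · rintro ⟨⟨i, rfl⟩, hz⟩; exact ⟨i, hz, rfl⟩
    · rintro ⟨i, hi, rfl⟩; exact ⟨⟨i, rfl⟩, hi⟩
  have hIfin : I.Finite := by
    rw [hSeq] at hfin
    exact Set.Finite.of_finite_image hfin (hφinj.injOn)
  have hIcard : I.ncard = (MAPK K a b).ncard := by
    rw [hSeq, Set.ncard_image_of_injective _ hφinj]
  have hIne : I.Nonempty := by
    rw [← Set.ncard_pos hIfin]
    have hpos : 0 < (MAPK K a b).ncard := by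
      by_contra h
      push_neg at h
      have h0 : (MAPK K a b).ncard = 0 := by omega
      rw [h0] at hlong
      norm_num at hlong
      linarith
    omega
  set F := hIfin.toFinset with hF
  have hFne : F.Nonempty := by rwa [hF, Set.Finite.toFinset_nonempty]
  set m := F.min' hFne with hm
  set M := F.max' hFne with hM
  have hmI : m ∈ I := hIfin.mem_toFinset.mp (F.min'_mem hFne)
  have hMI : M ∈ I := hIfin.mem_toFinset.mp (F.max'_mem hFne)
  have hmM : m ≤ M := F.min'_le M (F.max'_mem hFne)
  have hcard : F.card ≤ (M + 1 - m).toNat := by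
    calc F.card ≤ (Finset.Icc m M).card := by
          apply Finset.card_le_card
          intro i hi
          rw [Finset.mem_Icc]
          exact ⟨F.min'_le i hi, F.le_max' i hi⟩
      _ = (M + 1 - m).toNat := Int.card_Icc m M
  have hcardR : ((MAPK K a b).ncard : ℝ) ≤ (M : ℝ) + 1 - m := by
    have h1 : (MAPK K a b).ncard = F.card := by
      rw [← hIcard, hF, Set.ncard_eq_toFinset_card _ hIfin]
    have h2 : ((M + 1 - m).toNat : ℝ) = (M : ℝ) + 1 - m := by
      have h3 : ((M + 1 - m).toNat : ℤ) = M + 1 - m := Int.toNat_of_nonneg (by omega)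
      have h4 : (((M + 1 - m).toNat : ℤ) : ℝ) = ((M + 1 - m : ℤ) : ℝ) := by rw [h3]
      push_cast at h4 ⊢
      linarith
    rw [h1, ← h2]
    exact_mod_cast hcard
  have hsMm : s ≤ (M : ℝ) - m := by linarith
  -- geometry
  set ca : Fin d → ℝ := fun j => (a j : ℝ)
  set cb : Fin d → ℝ := fun j => (b j : ℝ)
  have hmK : ca + (m : ℝ) • cb ∈ K := by
    have := hmI
    rw [hI, Set.mem_setOf_eq] at this
    have h := this
    rw [intPoints, Set.mem_setOf_eq] at h
    rwa [coe_add_zsmul] at h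
  have hMK : ca + (M : ℝ) • cb ∈ K := by
    have := hMI
    rw [hI, Set.mem_setOf_eq] at this
    have h := this
    rw [intPoints, Set.mem_setOf_eq] at h
    rwa [coe_add_zsmul] at h
  have hKK : Convex ℝ (K - K) := hc.sub hc
  have h0KK : (0 : Fin d → ℝ) ∈ K - K := by
    have := Set.sub_mem_sub hx₀ hx₀
    rwa [sub_self] at this
  have hwKK : ((M : ℝ) - m) • cb ∈ K - K := by
    have := Set.sub_mem_sub hMK hmK
    have heq : (ca + (M : ℝ) • cb) - (ca + (m : ℝ) • cb) = ((M : ℝ) - m) • cb := by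
      rw [sub_smul]; abel
    rwa [heq] at this
  set u : ℝ := (M : ℝ) - m with hu
  have hu0 : 0 < u := lt_of_lt_of_le hs0 hsMm
  have hscb : s • cb ∈ K - K := by
    have ht0 : (0:ℝ) ≤ s / u := le_of_lt (div_pos hs0 hu0)
    have ht1 : s / u ≤ 1 := (div_le_one hu0).mpr hsMm
    have := hKK h0KK hwKK (by linarith : (0:ℝ) ≤ 1 - s/u) ht0 (by ring)
    rwa [smul_zero, zero_add, smul_smul, div_mul_cancel₀ _ (ne_of_gt hu0)] at this
  refine ⟨hb, ?_⟩
  rw [Set.mem_smul_set]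
  exact ⟨s • cb, hscb, by rw [smul_smul, one_div, inv_mul_cancel₀ (ne_of_gt hs0), one_smul]⟩

lemma sum_subtype_ite_mem {α : Type*} (Ω S : Set α) [Fintype ↥Ω]
    [DecidablePred (· ∈ S)] (hsub : S ⊆ Ω) (c : ℝ) :
    ∑ x : ↥Ω, (if (x : α) ∈ S then c else 0) = (S.ncard : ℝ) * c := by
  classical
  rw [Finset.sum_ite, Finset.sum_const, Finset.sum_const_zero, add_zero]
  have hfinS : S.Finite := Set.Finite.subset (Set.toFinite Ω) hsub
  haveI : Fintype ↥S := hfinS.fintype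
  have e : {x : ↥Ω // (x : α) ∈ S} ≃ ↥S :=
    { toFun := fun x => ⟨x.1, x.2⟩
      invFun := fun y => ⟨⟨y.1, hsub y.2⟩, y.2⟩
      left_inv := fun x => by ext; rfl
      right_inv := fun y => rfl }
  have hcard : (Finset.univ.filter fun x : ↥Ω => (x : α) ∈ S).card = S.ncard := by
    rw [← Fintype.card_subtype]
    rw [Fintype.card_congr e]
    rw [← Nat.card_coe_set_eq, Nat.card_eq_fintype_card]
  rw [hcard, nsmul_eq_mul]

lemma sum_subtype_ite_eq {α : Type*} (B : Set α) [Fintype ↥B] [DecidableEq α] (v : α)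
    (hv : v ∈ B) (f : ↥B → ℝ) :
    ∑ b : ↥B, (if (b : α) = v then f b else 0) = f ⟨v, hv⟩ := by
  classical
  have h : ∀ b : ↥B, ((b : α) = v) ↔ (b = ⟨v, hv⟩) := by
    intro b
    constructor
    · intro h; exact Subtype.ext h
    · intro h; rw [h]
  calc ∑ b : ↥B, (if (b : α) = v then f b else 0)
      = ∑ b : ↥B, (if b = ⟨v, hv⟩ then f b else 0) := by
        apply Finset.sum_congr rfl
        intro b _
        simp only [h b]
    _ = f ⟨v, hv⟩ := by rw [Finset.sum_ite_eq' Finset.univ]; simp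

open Classical in
noncomputable def Lfun {α : Type*} (s : ℝ) (Ω B : Set α) (𝒮 : Set (Set α)) (bw : ↥𝒮 → α) :
    ↥𝒮 → (↥Ω ⊕ ↥B × ↥Ω) → ℝ := fun S i =>
  Sum.elim
    (fun x : ↥Ω =>
      if ¬ (s + 1 ≤ (((S : Set α)).ncard : ℝ)) ∧ (x : α) ∈ (S : Set α) then (1 : ℝ) else 0)
    (fun p : ↥B × ↥Ω =>
      if (s + 1 ≤ (((S : Set α)).ncard : ℝ)) ∧ (p.1 : α) = bw S ∧ (p.2 : α) ∈ (S : Set α)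
      then Real.sqrt (s + 1) / Real.sqrt (((S : Set α)).ncard) else 0) i

open Classical in
noncomputable def Rfun {α : Type*} (s : ℝ) (Ω B : Set α) (M : α → α → Set α) :
    (↥Ω ⊕ ↥B × ↥Ω) → ↥Ω → ℝ := fun i y =>
  Sum.elim
    (fun x : ↥Ω => if (x : α) = (y : α) then (1 : ℝ) else 0)
    (fun p : ↥B × ↥Ω =>
      if (y : α) ∈ M (p.2 : α) (p.1 : α)
      then 1 / (Real.sqrt (((M (p.2 : α) (p.1 : α))).ncard) * Real.sqrt (s + 1)) else 0) i

section Main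

variable {α : Type*} {s : ℝ} {Ω B : Set α} {𝒮 : Set (Set α)} {bw : ↥𝒮 → α}
  {M : α → α → Set α} [Fintype ↥Ω] [Fintype ↥B]

theorem Lfun_prod (hs1 : 1 ≤ s)
    (hS_sub : ∀ S : ↥𝒮, (S : Set α) ⊆ Ω)
    (hbB : ∀ S : ↥𝒮, (s + 1 ≤ (((S : Set α)).ncard : ℝ)) → bw S ∈ B)
    (hSM : ∀ S : ↥𝒮, (s + 1 ≤ (((S : Set α)).ncard : ℝ)) →
      ∀ x ∈ (S : Set α), M x (bw S) = (S : Set α))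
    (S : ↥𝒮) (y : ↥Ω) :
    ∑ i : ↥Ω ⊕ ↥B × ↥Ω, Lfun s Ω B 𝒮 bw S i * Rfun s Ω B M i y =
      Set.indicator (S : Set α) (fun _ => (1 : ℝ)) (y : α) := by
  classical
  rw [Fintype.sum_sum_type]
  by_cases hl : s + 1 ≤ (((S : Set α)).ncard : ℝ)
  · -- long case
    set ℓ : ℝ := (((S : Set α)).ncard : ℝ) with hℓ
    have hℓpos : 0 < ℓ := by linarith
    have h1 : ∑ x : ↥Ω, Lfun s Ω B 𝒮 bw S (.inl x) * Rfun s Ω B M (.inl x) y = 0 := by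
      apply Finset.sum_eq_zero
      intro x _
      simp [Lfun, hl]
      exact fun h => absurd h (not_lt.mpr hl)
    rw [h1, zero_add, Fintype.sum_prod_type]
    have hbmem : bw S ∈ B := hbB S hl
    have hterm : ∀ (b : ↥B) (x : ↥Ω),
        Lfun s Ω B 𝒮 bw S (.inr (b, x)) * Rfun s Ω B M (.inr (b, x)) y =
        if (b : α) = bw S then
          (if (x : α) ∈ (S : Set α) ∧ (y : α) ∈ (S : Set α) then 1 / ℓ else 0) else 0 := by
      intro b x
      simp only [Lfun, Rfun, Sum.elim_inr]
      by_cases hb : (b : α) = bw S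
      · rw [if_pos hb, hb]
        by_cases hx : (x : α) ∈ (S : Set α)
        · have hMx : M (x : α) (bw S) = (S : Set α) := hSM S hl x hx
          rw [hMx]
          rw [if_pos ⟨hl, rfl, hx⟩]
          by_cases hy : (y : α) ∈ (S : Set α)
          · rw [if_pos hy, if_pos ⟨hx, hy⟩]
            have h2 : Real.sqrt (s + 1) ≠ 0 := by positivity
            calc Real.sqrt (s + 1) / Real.sqrt ℓ * (1 / (Real.sqrt ℓ * Real.sqrt (s + 1)))
                = (Real.sqrt (s + 1) / Real.sqrt (s + 1)) * (1 / (Real.sqrt ℓ * Real.sqrt ℓ)) := by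
                  ring
              _ = 1 / ℓ := by
                  rw [div_self h2, Real.mul_self_sqrt hℓpos.le, one_mul]
          · rw [if_neg hy, if_neg (fun h => hy h.2), mul_zero]
        · simp [hx]
      · rw [if_neg hb, if_neg (fun h => hb h.2.1), zero_mul]
    calc ∑ b : ↥B, ∑ x : ↥Ω,
          Lfun s Ω B 𝒮 bw S (.inr (b, x)) * Rfun s Ω B M (.inr (b, x)) y
        = ∑ b : ↥B, (if (b : α) = bw S then
            (∑ x : ↥Ω, if (x : α) ∈ (S : Set α) ∧ (y : α) ∈ (S : Set α) then 1 / ℓ else 0)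
            else 0) := by
          apply Finset.sum_congr rfl
          intro b _
          rw [Finset.sum_congr rfl (fun x _ => hterm b x)]
          split <;> simp
      _ = ∑ x : ↥Ω, (if (x : α) ∈ (S : Set α) ∧ (y : α) ∈ (S : Set α) then 1 / ℓ else 0) :=
          sum_subtype_ite_eq B (bw S) hbmem _
      _ = Set.indicator (S : Set α) (fun _ => (1 : ℝ)) (y : α) := by
          by_cases hy : (y : α) ∈ (S : Set α)
          · simp only [hy, and_true]
            rw [sum_subtype_ite_mem Ω (S : Set α) (hS_sub S) (1 / ℓ)]
            rw [Set.indicator_of_mem hy]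
            field_simp
            exact hℓ.symm
          · simp only [hy, and_false, if_false, Finset.sum_const_zero]
            rw [Set.indicator_of_notMem hy]
  · -- short case
    have h2 : ∑ p : ↥B × ↥Ω,
        Lfun s Ω B 𝒮 bw S (.inr p) * Rfun s Ω B M (.inr p) y = 0 := by
      apply Finset.sum_eq_zero
      intro p _
      simp [Lfun, hl]
    rw [h2, add_zero]
    have hterm : ∀ x : ↥Ω,
        Lfun s Ω B 𝒮 bw S (.inl x) * Rfun s Ω B M (.inl x) y =
        if (x : α) = (y : α) then (if (x : α) ∈ (S : Set α) then (1:ℝ) else 0) else 0 := by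
      intro x
      simp only [Lfun, Rfun, Sum.elim_inl]
      by_cases hxy : (x : α) = (y : α)
      · rw [if_pos hxy, if_pos hxy, mul_one]
        by_cases hx : (x : α) ∈ (S : Set α)
        · rw [if_pos ⟨hl, hx⟩, if_pos hx]
        · rw [if_neg (fun h => hx h.2), if_neg hx]
      · rw [if_neg hxy, if_neg hxy, mul_zero]
    rw [Finset.sum_congr rfl (fun x _ => hterm x)]
    rw [sum_subtype_ite_eq Ω (y : α) y.2 _]
    simp only [Subtype.coe_eta]
    rw [Set.indicator_apply]

theorem Lfun_row (hs1 : 1 ≤ s)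
    (hS_sub : ∀ S : ↥𝒮, (S : Set α) ⊆ Ω)
    (hbB : ∀ S : ↥𝒮, (s + 1 ≤ (((S : Set α)).ncard : ℝ)) → bw S ∈ B)
    (S : ↥𝒮) :
    ∑ i : ↥Ω ⊕ ↥B × ↥Ω, (Lfun s Ω B 𝒮 bw S i) ^ 2 ≤ s + 1 := by
  classical
  rw [Fintype.sum_sum_type]
  set ℓ : ℝ := (((S : Set α)).ncard : ℝ) with hℓ
  by_cases hl : s + 1 ≤ ℓ
  · have hℓpos : 0 < ℓ := by linarith
    have h1 : ∑ x : ↥Ω, (Lfun s Ω B 𝒮 bw S (.inl x)) ^ 2 = 0 := by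
      apply Finset.sum_eq_zero
      intro x _
      simp [Lfun, hl]
      exact fun h => absurd h (not_lt.mpr hl)
    rw [h1, zero_add, Fintype.sum_prod_type]
    have hterm : ∀ (b : ↥B) (x : ↥Ω),
        (Lfun s Ω B 𝒮 bw S (.inr (b, x))) ^ 2 =
        if (b : α) = bw S then (if (x : α) ∈ (S : Set α) then (s + 1) / ℓ else 0) else 0 := by
      intro b x
      simp only [Lfun, Sum.elim_inr]
      by_cases hb : (b : α) = bw S
      · by_cases hx : (x : α) ∈ (S : Set α)
        · rw [if_pos ⟨hl, hb, hx⟩, if_pos hb, if_pos hx, div_pow,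
            Real.sq_sqrt (by linarith : (0:ℝ) ≤ s + 1), Real.sq_sqrt hℓpos.le]
        · rw [if_neg (fun h => hx h.2.2), if_pos hb, if_neg hx]
          norm_num
      · rw [if_neg (fun h => hb h.2.1), if_neg hb]
        norm_num
    calc ∑ b : ↥B, ∑ x : ↥Ω, (Lfun s Ω B 𝒮 bw S (.inr (b, x))) ^ 2
        = ∑ b : ↥B, (if (b : α) = bw S then
            (∑ x : ↥Ω, if (x : α) ∈ (S : Set α) then (s + 1) / ℓ else 0) else 0) := by
          apply Finset.sum_congr rfl
          intro b _
          rw [Finset.sum_congr rfl (fun x _ => hterm b x)]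
          split <;> simp
      _ = ∑ x : ↥Ω, (if (x : α) ∈ (S : Set α) then (s + 1) / ℓ else 0) :=
          sum_subtype_ite_eq B (bw S) (hbB S hl) _
      _ = ℓ * ((s + 1) / ℓ) := sum_subtype_ite_mem Ω (S : Set α) (hS_sub S) _
      _ = s + 1 := by field_simp
      _ ≤ s + 1 := le_refl _
  · have h2 : ∑ p : ↥B × ↥Ω, (Lfun s Ω B 𝒮 bw S (.inr p)) ^ 2 = 0 := by
      apply Finset.sum_eq_zero
      intro p _
      simp [Lfun, hl]
      exact fun h => absurd h hl
    rw [h2, add_zero]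
    have hterm : ∀ x : ↥Ω, (Lfun s Ω B 𝒮 bw S (.inl x)) ^ 2 =
        if (x : α) ∈ (S : Set α) then (1:ℝ) else 0 := by
      intro x
      simp only [Lfun, Sum.elim_inl]
      by_cases hx : (x : α) ∈ (S : Set α)
      · rw [if_pos ⟨hl, hx⟩, if_pos hx, one_pow]
      · rw [if_neg (fun h => hx h.2), if_neg hx]
        norm_num
    rw [Finset.sum_congr rfl (fun x _ => hterm x),
      sum_subtype_ite_mem Ω (S : Set α) (hS_sub S) 1, mul_one]
    push_neg at hl
    linarith

theorem Rfun_col (hs1 : 1 ≤ s) (hBcard : (B.ncard : ℝ) ≤ s - 1)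
    (hM_sub : ∀ x b, M x b ⊆ Ω)
    (hM_self : ∀ x, x ∈ Ω → ∀ b, x ∈ M x b)
    (hM_symm : ∀ x y b, x ∈ Ω → y ∈ M x b → x ∈ M y b)
    (hM_eq : ∀ x y b, x ∈ M y b → M x b = M y b)
    (y : ↥Ω) :
    ∑ i : ↥Ω ⊕ ↥B × ↥Ω, (Rfun s Ω B M i y) ^ 2 ≤ 2 * s / (s + 1) := by
  classical
  have hs0 : (0:ℝ) < s + 1 := by linarith
  rw [Fintype.sum_sum_type]
  have h1 : ∑ x : ↥Ω, (Rfun s Ω B M (.inl x) y) ^ 2 = 1 := by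
    have hterm : ∀ x : ↥Ω, (Rfun s Ω B M (.inl x) y) ^ 2 =
        if (x : α) = (y : α) then (1:ℝ) else 0 := by
      intro x
      simp only [Rfun, Sum.elim_inl]
      by_cases hxy : (x : α) = (y : α)
      · rw [if_pos hxy, one_pow]
      · rw [if_neg hxy]
        norm_num
    rw [Finset.sum_congr rfl (fun x _ => hterm x),
      sum_subtype_ite_eq Ω (y : α) y.2 (fun _ => (1:ℝ))]
  have h2 : ∑ p : ↥B × ↥Ω, (Rfun s Ω B M (.inr p) y) ^ 2 =
      (B.ncard : ℝ) * (1 / (s + 1)) := by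
    rw [Fintype.sum_prod_type]
    have hinner : ∀ b : ↥B, ∑ x : ↥Ω, (Rfun s Ω B M (.inr (b, x)) y) ^ 2 = 1 / (s + 1) := by
      intro b
      set n : ℝ := ((M (y : α) (b : α)).ncard : ℝ) with hn
      have hyy : (y : α) ∈ M (y : α) (b : α) := hM_self _ y.2 _
      have hMfin : (M (y : α) (b : α)).Finite :=
        (Set.toFinite Ω).subset (hM_sub _ _)
      have hnpos : 0 < n := by
        have h0 := (Set.ncard_pos hMfin).mpr ⟨_, hyy⟩
        rw [hn]
        exact_mod_cast h0
      have hterm : ∀ x : ↥Ω, (Rfun s Ω B M (.inr (b, x)) y) ^ 2 =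
          if (x : α) ∈ M (y : α) (b : α) then 1 / (n * (s + 1)) else 0 := by
        intro x
        simp only [Rfun, Sum.elim_inr]
        by_cases h : (y : α) ∈ M (x : α) (b : α)
        · have h' : (x : α) ∈ M (y : α) (b : α) := hM_symm _ _ _ x.2 h
          have heq : M (x : α) (b : α) = M (y : α) (b : α) := hM_eq _ _ _ h'
          rw [heq, if_pos hyy, if_pos h', div_pow, one_pow, mul_pow,
            Real.sq_sqrt hnpos.le, Real.sq_sqrt hs0.le]
        · have h'' : (x : α) ∉ M (y : α) (b : α) := fun hx => h (hM_symm _ _ _ y.2 hx)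
          rw [if_neg h, if_neg h'']
          norm_num
      rw [Finset.sum_congr rfl (fun x _ => hterm x),
        sum_subtype_ite_mem Ω (M (y : α) (b : α)) (hM_sub _ _) _]
      rw [← hn]
      field_simp
    rw [Finset.sum_congr rfl (fun b _ => hinner b), Finset.sum_const, Finset.card_univ,
      nsmul_eq_mul]
    congr 1
    rw [← Nat.card_coe_set_eq, Nat.card_eq_fintype_card]
  rw [h1, h2]
  have key : (B.ncard : ℝ) * (1 / (s + 1)) ≤ (s - 1) / (s + 1) := by
    rw [mul_one_div]
    gcongr
  have halg : 1 + (s - 1) / (s + 1) = 2 * s / (s + 1) := by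
    field_simp
    ring
  linarith

end Main


/-- γ₂ of the system of all maximal APs inside a convex body K is at
most √2 · f(K). -/
theorem stmt12 (d : ℕ) (K : Set (Fin d → ℝ)) (hK : IsConvexBody K) :
    gamma2S (intPoints K) {S | ∃ a b : Fin d → ℤ, S = MAPK K a b} ≤
      Real.sqrt 2 * fBody K := by
  classical
  obtain ⟨hKconv, hKcomp, hKint⟩ := hK
  obtain ⟨x₁, hx₁⟩ := hKint
  have hx₀ : x₁ ∈ K := interior_subset hx₁
  have hKbdd : Bornology.IsBounded K := hKcomp.isBounded
  have hKKbdd : Bornology.IsBounded (K - K) := hKbdd.sub hKbdd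
  have hΩfin : (intPoints K).Finite := intPoints_finite hKbdd
  have hKKconv : Convex ℝ (K - K) := hKconv.sub hKconv
  have h0KK : (0 : Fin d → ℝ) ∈ K - K := by
    have := Set.sub_mem_sub hx₀ hx₀
    rwa [sub_self] at this
  set T : Set ℝ := { s : ℝ | 0 < s ∧ (zetaSet (K - K) (1 / s) : ℝ) ≤ s } with hT
  have hcoe0 : (fun i => (((0 : Fin d → ℤ)) i : ℝ)) = (0 : Fin d → ℝ) := by
    funext i; simp
  have h0mem : ∀ s : ℝ, (0 : Fin d → ℤ) ∈ intPoints ((1/s) • (K - K)) := by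
    intro s
    show (fun i => (((0 : Fin d → ℤ)) i : ℝ)) ∈ (1/s) • (K - K)
    rw [hcoe0]
    exact ⟨0, h0KK, smul_zero _⟩
  have hfinB : ∀ s : ℝ, (intPoints ((1/s) • (K - K))).Finite := fun s =>
    intPoints_finite (hKKbdd.smul₀ _)
  -- T is nonempty
  have hTne : T.Nonempty := by
    refine ⟨max 1 ((zetaSet (K - K) 1 : ℕ) : ℝ),
      lt_of_lt_of_le one_pos (le_max_left _ _), ?_⟩
    set s₀ : ℝ := max 1 ((zetaSet (K - K) 1 : ℕ) : ℝ) with hs₀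
    have hs₀1 : (1:ℝ) ≤ s₀ := le_max_left _ _
    have hsub : intPoints ((1/s₀) • (K - K)) ⊆ intPoints (K - K) := by
      intro v hv
      rcases Set.mem_smul_set.mp hv with ⟨w, hw, hwv⟩
      show (fun i => (v i : ℝ)) ∈ K - K
      rw [← hwv]
      have h1 : (0:ℝ) ≤ 1/s₀ := by positivity
      have h2 : 1/s₀ ≤ 1 := by
        rw [div_le_one (by linarith)]; linarith
      have h3 := hKKconv hw h0KK h1 (by linarith : (0:ℝ) ≤ 1 - 1/s₀)
        (by ring : 1/s₀ + (1 - 1/s₀) = 1)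
      rwa [smul_zero, add_zero] at h3
    have hle : zetaSet (K - K) (1/s₀) ≤ zetaSet (K - K) 1 := by
      show (intPoints ((1/s₀) • (K - K))).ncard ≤ (intPoints ((1:ℝ) • (K - K))).ncard
      rw [one_smul]
      exact Set.ncard_le_ncard hsub (intPoints_finite hKKbdd)
    calc (zetaSet (K - K) (1/s₀) : ℝ) ≤ (zetaSet (K - K) 1 : ℝ) := by exact_mod_cast hle
      _ ≤ s₀ := le_max_right _ _
  have hs1T : ∀ s ∈ T, (1:ℝ) ≤ s := by
    rintro s ⟨hs0, hsle⟩
    have h1 : 1 ≤ zetaSet (K - K) (1/s) := (Set.ncard_pos (hfinB s)).mpr ⟨0, h0mem s⟩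
    calc (1:ℝ) ≤ (zetaSet (K - K) (1/s) : ℝ) := by exact_mod_cast h1
      _ ≤ s := hsle
  -- the main bound:  γ₂ ≤ √(2s) for every s ∈ T
  have hmain : ∀ s ∈ T, gamma2S (intPoints K) {S | ∃ a b : Fin d → ℤ, S = MAPK K a b}
      ≤ Real.sqrt (2 * s) := by
    rintro s ⟨hs0, hsle⟩
    have hs1 : (1:ℝ) ≤ s := hs1T s ⟨hs0, hsle⟩
    set Ω : Set (Fin d → ℤ) := intPoints K with hΩdef
    set B : Set (Fin d → ℤ) := intPoints ((1/s) • (K - K)) \ {0} with hBdef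
    have hBfin : B.Finite := (hfinB s).subset Set.diff_subset
    have hBcard : (B.ncard : ℝ) ≤ s - 1 := by
      have h1 : B.ncard = (intPoints ((1/s) • (K - K))).ncard - 1 :=
        Set.ncard_diff_singleton_of_mem (h0mem s)
      have h2 : 1 ≤ (intPoints ((1/s) • (K - K))).ncard :=
        (Set.ncard_pos (hfinB s)).mpr ⟨0, h0mem s⟩
      have h3 : ((intPoints ((1/s) • (K - K))).ncard : ℝ) ≤ s := hsle
      rw [h1, Nat.cast_sub h2]
      push_cast
      linarith
    haveI : Fintype ↥Ω := hΩfin.fintype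
    haveI : Fintype ↥B := hBfin.fintype
    set 𝒮 : Set (Set (Fin d → ℤ)) := {S | ∃ a b : Fin d → ℤ, S = MAPK K a b} with h𝒮
    have hwit : ∀ S : ↥𝒮, ∃ a b : Fin d → ℤ, (S : Set (Fin d → ℤ)) = MAPK K a b :=
      fun S => S.2
    choose aw bw hab using hwit
    have hS_sub : ∀ S : ↥𝒮, (S : Set (Fin d → ℤ)) ⊆ Ω := by
      intro S
      rw [hab S]
      exact MAPK_subset K _ _
    have hbB : ∀ S : ↥𝒮, s + 1 ≤ (((S : Set (Fin d → ℤ))).ncard : ℝ) → bw S ∈ B := by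
      intro S hl
      have hfin : (MAPK K (aw S) (bw S)).Finite := by
        rw [← hab S]; exact hΩfin.subset (hS_sub S)
      have hlong : s + 1 ≤ ((MAPK K (aw S) (bw S)).ncard : ℝ) := by
        rw [← hab S]; exact hl
      obtain ⟨hb0, hbm⟩ := long_diff_mem hKconv hx₀ hs1 hfin hlong
      exact ⟨hbm, by simpa using hb0⟩
    have hSM : ∀ S : ↥𝒮, s + 1 ≤ (((S : Set (Fin d → ℤ))).ncard : ℝ) →
        ∀ x ∈ (S : Set (Fin d → ℤ)), MAPK K x (bw S) = (S : Set (Fin d → ℤ)) := by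
      intro S _ x hx
      rw [hab S] at hx ⊢
      exact MAPK_eq_of_mem hx
    have hM_sub : ∀ x b : Fin d → ℤ, MAPK K x b ⊆ Ω := fun x b => MAPK_subset K x b
    have hM_self : ∀ x, x ∈ Ω → ∀ b, x ∈ MAPK K x b := fun x hx b => mem_MAPK_self hx b
    have hM_symm : ∀ x y b : Fin d → ℤ, x ∈ Ω → y ∈ MAPK K x b → x ∈ MAPK K y b :=
      fun x y b hx hy => mem_MAPK_symm hx hy
    have hM_eq : ∀ x y b : Fin d → ℤ, x ∈ MAPK K y b → MAPK K x b = MAPK K y b :=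
      fun x y b h => MAPK_eq_of_mem h
    set k : ℕ := Fintype.card (↥Ω ⊕ ↥B × ↥Ω) with hk
    set e : (↥Ω ⊕ ↥B × ↥Ω) ≃ Fin k := Fintype.equivFin _ with he
    set L : ↥𝒮 → Fin k → ℝ := fun S t => Lfun s Ω B 𝒮 bw S (e.symm t) with hL
    set R : Fin k → ↥Ω → ℝ := fun t y => Rfun s Ω B (MAPK K) (e.symm t) y with hR
    have hLR : ∀ (S : ↥𝒮) (y : ↥Ω), (∑ t, L S t * R t y) =
        Set.indicator (S : Set (Fin d → ℤ)) (fun _ => (1:ℝ)) (y : Fin d → ℤ) := by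
      intro S y
      have htrans := Equiv.sum_comp e.symm
        (fun i => Lfun s Ω B 𝒮 bw S i * Rfun s Ω B (MAPK K) i y)
      calc (∑ t, L S t * R t y)
          = ∑ i : ↥Ω ⊕ ↥B × ↥Ω, Lfun s Ω B 𝒮 bw S i * Rfun s Ω B (MAPK K) i y := htrans
        _ = Set.indicator (S : Set (Fin d → ℤ)) (fun _ => (1:ℝ)) (y : Fin d → ℤ) :=
            Lfun_prod hs1 hS_sub hbB hSM S y
    have hrow : ∀ S : ↥𝒮, Real.sqrt (∑ t, L S t ^ 2) ≤ Real.sqrt (s + 1) := by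
      intro S
      apply Real.sqrt_le_sqrt
      have htrans := Equiv.sum_comp e.symm (fun i => (Lfun s Ω B 𝒮 bw S i) ^ 2)
      calc (∑ t, L S t ^ 2)
          = ∑ i : ↥Ω ⊕ ↥B × ↥Ω, (Lfun s Ω B 𝒮 bw S i) ^ 2 := htrans
        _ ≤ s + 1 := Lfun_row hs1 hS_sub hbB S
    have hcol : ∀ y : ↥Ω, Real.sqrt (∑ t, R t y ^ 2) ≤ Real.sqrt (2 * s / (s + 1)) := by
      intro y
      apply Real.sqrt_le_sqrt
      have htrans := Equiv.sum_comp e.symm (fun i => (Rfun s Ω B (MAPK K) i y) ^ 2)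
      calc (∑ t, R t y ^ 2)
          = ∑ i : ↥Ω ⊕ ↥B × ↥Ω, (Rfun s Ω B (MAPK K) i y) ^ 2 := htrans
        _ ≤ 2 * s / (s + 1) :=
            Rfun_col hs1 hBcard hM_sub hM_self hM_symm hM_eq y
    have hA : (⨆ S : ↥𝒮, Real.sqrt (∑ t, L S t ^ 2)) ≤ Real.sqrt (s + 1) :=
      Real.iSup_le hrow (Real.sqrt_nonneg _)
    have hB' : (⨆ y : ↥Ω, Real.sqrt (∑ t, R t y ^ 2)) ≤ Real.sqrt (2 * s / (s + 1)) :=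
      Real.iSup_le hcol (Real.sqrt_nonneg _)
    have hA0 : 0 ≤ ⨆ S : ↥𝒮, Real.sqrt (∑ t, L S t ^ 2) :=
      Real.iSup_nonneg (fun _ => Real.sqrt_nonneg _)
    have hB0 : 0 ≤ ⨆ y : ↥Ω, Real.sqrt (∑ t, R t y ^ 2) :=
      Real.iSup_nonneg (fun _ => Real.sqrt_nonneg _)
    have hbdd : BddBelow { c : ℝ | ∃ (k : ℕ) (L : ↥𝒮 → Fin k → ℝ) (R : Fin k → ↥Ω → ℝ),
        (∀ (S : ↥𝒮) (x : ↥Ω), (∑ t, L S t * R t x) =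
            Set.indicator (S : Set (Fin d → ℤ)) (fun _ => (1 : ℝ)) (x : Fin d → ℤ)) ∧
        c = (⨆ S : ↥𝒮, Real.sqrt (∑ t, L S t ^ 2)) *
            (⨆ x : ↥Ω, Real.sqrt (∑ t, R t x ^ 2)) } := by
      refine ⟨0, ?_⟩
      rintro c ⟨k', L', R', -, rfl⟩
      exact mul_nonneg (Real.iSup_nonneg fun _ => Real.sqrt_nonneg _)
        (Real.iSup_nonneg fun _ => Real.sqrt_nonneg _)
    have hmem : ((⨆ S : ↥𝒮, Real.sqrt (∑ t, L S t ^ 2)) *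
        (⨆ y : ↥Ω, Real.sqrt (∑ t, R t y ^ 2))) ∈
        { c : ℝ | ∃ (k : ℕ) (L : ↥𝒮 → Fin k → ℝ) (R : Fin k → ↥Ω → ℝ),
        (∀ (S : ↥𝒮) (x : ↥Ω), (∑ t, L S t * R t x) =
            Set.indicator (S : Set (Fin d → ℤ)) (fun _ => (1 : ℝ)) (x : Fin d → ℤ)) ∧
        c = (⨆ S : ↥𝒮, Real.sqrt (∑ t, L S t ^ 2)) *
            (⨆ x : ↥Ω, Real.sqrt (∑ t, R t x ^ 2)) } :=
      ⟨k, L, R, hLR, rfl⟩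
    have hle : gamma2S Ω 𝒮 ≤ (⨆ S : ↥𝒮, Real.sqrt (∑ t, L S t ^ 2)) *
        (⨆ y : ↥Ω, Real.sqrt (∑ t, R t y ^ 2)) := csInf_le hbdd hmem
    have heq : Real.sqrt (s + 1) * Real.sqrt (2 * s / (s + 1)) = Real.sqrt (2 * s) := by
      rw [← Real.sqrt_mul (by linarith : (0:ℝ) ≤ s + 1)]
      congr 1
      field_simp
    calc gamma2S Ω 𝒮
        ≤ (⨆ S : ↥𝒮, Real.sqrt (∑ t, L S t ^ 2)) *
          (⨆ y : ↥Ω, Real.sqrt (∑ t, R t y ^ 2)) := hle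
      _ ≤ Real.sqrt (s + 1) * Real.sqrt (2 * s / (s + 1)) :=
          mul_le_mul hA hB' hB0 (Real.sqrt_nonneg _)
      _ = Real.sqrt (2 * s) := heq
  -- conclusion
  have hfB : fBody K = Real.sqrt (sInf T) := rfl
  rw [hfB]
  set g : ℝ := gamma2S (intPoints K) {S | ∃ a b : Fin d → ℤ, S = MAPK K a b} with hg
  by_cases hg0 : g ≤ 0
  · exact le_trans hg0 (mul_nonneg (Real.sqrt_nonneg 2) (Real.sqrt_nonneg _))
  · push_neg at hg0
    have hsq : ∀ s ∈ T, g ^ 2 ≤ 2 * s := by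
      intro s hs
      have h1 := hmain s hs
      have h2 : g ^ 2 ≤ (Real.sqrt (2 * s)) ^ 2 := pow_le_pow_left₀ hg0.le h1 2
      rwa [Real.sq_sqrt (by have := hs1T s hs; linarith : (0:ℝ) ≤ 2 * s)] at h2
    have hInf : g ^ 2 / 2 ≤ sInf T :=
      le_csInf hTne (fun s hs => by have := hsq s hs; linarith)
    calc g = Real.sqrt (g ^ 2) := (Real.sqrt_sq hg0.le).symm
      _ ≤ Real.sqrt (2 * sInf T) := Real.sqrt_le_sqrt (by linarith)
      _ = Real.sqrt 2 * Real.sqrt (sInf T) := Real.sqrt_mul (by norm_num) _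
end

section
/- Let K be a centrally symmetric convex body in ℝ^d (K = −K) and let ζ_K(t) := |ℤ^d ∩ tK|. Then for every real t ≥ 1: ζ_K(1) ≤ ζ_K(t) ≤ 5^d · t^d · ζ_K(1). -/
open scoped Pointwise BigOperators

/-- for a centrally symmetric convex body K and t ≥ 1,
ζ_K(1) ≤ ζ_K(t) ≤ 5^d t^d ζ_K(1). -/
theorem stmt14 (d : ℕ) (K : Set (Fin d → ℝ)) (hK : IsConvexBody K) (hsym : K = -K)
    (t : ℝ) (ht : 1 ≤ t) :
    zetaSet K 1 ≤ zetaSet K t ∧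
      (zetaSet K t : ℝ) ≤ 5 ^ d * t ^ d * (zetaSet K 1 : ℝ) := by
  obtain ⟨hconv, hcomp, hint⟩ := hK
  have ht0 : (0:ℝ) < t := lt_of_lt_of_le one_pos ht
  -- 0 ∈ K
  have h0K : (0 : Fin d → ℝ) ∈ K := by
    obtain ⟨a, ha⟩ := hint
    have haK : a ∈ K := interior_subset ha
    have hna : -a ∈ K := by rw [hsym, Set.mem_neg, neg_neg]; exact haK
    have := hconv haK hna (by norm_num : (0:ℝ) ≤ 1/2) (by norm_num : (0:ℝ) ≤ 1/2)
      (by norm_num)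
    simpa using this
  have hscale : ∀ s : ℝ, 0 ≤ s → s ≤ 1 → ∀ x ∈ K, s • x ∈ K := by
    intro s h0 h1 x hx
    have := hconv hx h0K h0 (by linarith : (0:ℝ) ≤ 1 - s) (by ring)
    simpa using this
  -- K ⊆ t • K
  have hsub : K ⊆ t • K := by
    intro x hx
    refine ⟨(1/t) • x, hscale (1/t) (by positivity) (by
      rw [div_le_one ht0]; linarith) x hx, ?_⟩
    show t • ((1/t) • x) = x
    rw [smul_smul, mul_one_div_cancel ht0.ne', one_smul]
  have hsub1 : intPoints ((1:ℝ) • K) ⊆ intPoints (t • K) := by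
    intro x hx
    exact hsub (by simpa [intPoints, one_smul] using hx)
  -- finiteness
  have hbt : Bornology.IsBounded (t • K) := by
    have : IsCompact (t • K) := hcomp.smul t
    exact this.isBounded
  have hfin_t : (intPoints (t • K)).Finite := intPoints_finite hbt
  have hfin_1 : (intPoints ((1:ℝ) • K)).Finite := hfin_t.subset hsub1
  constructor
  · exact Set.ncard_le_ncard hsub1 hfin_t
  -- second inequality
  set m : ℕ := ⌈2*t⌉₊ with hm
  have hmt : 2*t ≤ (m:ℝ) := Nat.le_ceil _
  have hmpos : 0 < m := by
    rw [hm]; exact Nat.ceil_pos.mpr (by linarith)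
  have hmR : (0:ℝ) < m := by exact_mod_cast hmpos
  haveI : NeZero m := ⟨hmpos.ne'⟩
  -- the key geometric step
  have hkey : ∀ x y : Fin d → ℤ, x ∈ intPoints (t • K) → y ∈ intPoints (t • K) →
      (∀ i, (m:ℤ) ∣ (y i - x i)) →
      (fun i => (y i - x i) / (m:ℤ)) ∈ intPoints ((1:ℝ) • K) := by
    intro x y hx hy hdvd
    obtain ⟨a, haK, hax⟩ := hx
    obtain ⟨b, hbK, hby⟩ := hy
    have hnaK : -a ∈ K := by rw [hsym, Set.mem_neg, neg_neg]; exact haK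
    have hmid : (1/2 : ℝ) • b + (1/2 : ℝ) • (-a) ∈ K :=
      hconv hbK hnaK (by norm_num) (by norm_num) (by norm_num)
    have hsK : (2*t/(m:ℝ)) • ((1/2 : ℝ) • b + (1/2 : ℝ) • (-a)) ∈ K :=
      hscale _ (by positivity) (by rw [div_le_one hmR]; linarith) _ hmid
    have heq : (fun i => (((y i - x i) / (m:ℤ) : ℤ) : ℝ)) =
        (2*t/(m:ℝ)) • ((1/2 : ℝ) • b + (1/2 : ℝ) • (-a)) := by
      funext i
      have hdi := hdvd i
      have h1 : (((y i - x i) / (m:ℤ) : ℤ) : ℝ) * (m:ℝ) = (y i : ℝ) - (x i : ℝ) := by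
        have := Int.ediv_mul_cancel hdi
        exact_mod_cast congrArg (fun z : ℤ => (z : ℝ)) this
      have hax' : t * a i = (x i : ℝ) := congrFun hax i
      have hby' : t * b i = (y i : ℝ) := congrFun hby i
      simp only [Pi.smul_apply, Pi.add_apply, Pi.neg_apply, smul_eq_mul]
      field_simp
      nlinarith [h1, hax', hby']
    rw [intPoints, Set.mem_setOf_eq, heq]
    exact ⟨_, hsK, one_smul ℝ _⟩
  -- counting
  classical
  set Ft := hfin_t.toFinset with hFt
  set F1 := hfin_1.toFinset with hF1
  have hzt : zetaSet K t = Ft.card := Set.ncard_eq_toFinset_card _ hfin_t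
  have hz1 : zetaSet K 1 = F1.card := Set.ncard_eq_toFinset_card _ hfin_1
  set φ : (Fin d → ℤ) → (Fin d → ZMod m) := fun x i => ((x i : ℤ) : ZMod m) with hφ
  have hfiber : ∀ c : Fin d → ZMod m,
      (Ft.filter (fun x => φ x = c)).card ≤ F1.card := by
    intro c
    rcases Finset.eq_empty_or_nonempty (Ft.filter (fun x => φ x = c)) with he | ⟨x₀, hx₀⟩
    · simp [he]
    have hx₀t : x₀ ∈ intPoints (t • K) := by
      have := (Finset.mem_filter.mp hx₀).1
      rwa [hFt, Set.Finite.mem_toFinset] at this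
    have hx₀c : φ x₀ = c := (Finset.mem_filter.mp hx₀).2
    apply Finset.card_le_card_of_injOn (fun y i => (y i - x₀ i) / (m:ℤ))
    · intro y hy
      have hyt : y ∈ intPoints (t • K) := by
        have := (Finset.mem_filter.mp hy).1
        rwa [hFt, Set.Finite.mem_toFinset] at this
      have hyc : φ y = c := (Finset.mem_filter.mp hy).2
      have hdvd : ∀ i, (m:ℤ) ∣ (y i - x₀ i) := by
        intro i
        have : ((y i : ℤ) : ZMod m) = ((x₀ i : ℤ) : ZMod m) := by
          have := congrFun (hyc.trans hx₀c.symm) i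
          exact this
        have hmod := (ZMod.intCast_eq_intCast_iff _ _ _).mp this
        exact (Int.ModEq.dvd hmod.symm)
      rw [hF1, Finset.mem_coe, Set.Finite.mem_toFinset]
      exact hkey x₀ y hx₀t hyt hdvd
    · intro y hy z hz hyz
      have hdy : ∀ i, (m:ℤ) ∣ (y i - x₀ i) := by
        intro i
        have hyc : φ y = c := (Finset.mem_filter.mp hy).2
        have : ((y i : ℤ) : ZMod m) = ((x₀ i : ℤ) : ZMod m) :=
          congrFun (hyc.trans hx₀c.symm) i
        exact Int.ModEq.dvd ((ZMod.intCast_eq_intCast_iff _ _ _).mp this).symm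
      have hdz : ∀ i, (m:ℤ) ∣ (z i - x₀ i) := by
        intro i
        have hzc : φ z = c := (Finset.mem_filter.mp hz).2
        have : ((z i : ℤ) : ZMod m) = ((x₀ i : ℤ) : ZMod m) :=
          congrFun (hzc.trans hx₀c.symm) i
        exact Int.ModEq.dvd ((ZMod.intCast_eq_intCast_iff _ _ _).mp this).symm
      funext i
      have h1 : (y i - x₀ i) / (m:ℤ) = (z i - x₀ i) / (m:ℤ) := congrFun hyz i
      have h2 : y i - x₀ i = z i - x₀ i := by
        have e1 := Int.ediv_mul_cancel (hdy i)
        have e2 := Int.ediv_mul_cancel (hdz i)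
        calc y i - x₀ i = (y i - x₀ i) / (m:ℤ) * m := e1.symm
          _ = (z i - x₀ i) / (m:ℤ) * m := by rw [h1]
          _ = z i - x₀ i := e2
      omega
  have hcount : Ft.card ≤ m ^ d * F1.card := by
    have := Finset.card_eq_sum_card_fiberwise
      (fun x (_ : x ∈ Ft) => Finset.mem_univ (φ x))
    calc Ft.card = ∑ c : Fin d → ZMod m, (Ft.filter (fun x => φ x = c)).card := this
      _ ≤ ∑ _c : Fin d → ZMod m, F1.card := Finset.sum_le_sum (fun c _ => hfiber c)
      _ = Fintype.card (Fin d → ZMod m) * F1.card := by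
          rw [Finset.sum_const, Finset.card_univ, smul_eq_mul]
      _ = m ^ d * F1.card := by rw [Fintype.card_fun, ZMod.card, Fintype.card_fin]
  -- final real inequality
  have hm5 : (m:ℝ) ≤ 5 * t := by
    have : (⌈2*t⌉₊ : ℝ) < 2*t + 1 := Nat.ceil_lt_add_one (by linarith)
    rw [hm]; linarith
  have hstep : (zetaSet K t : ℝ) ≤ ((m:ℝ)) ^ d * (zetaSet K 1 : ℝ) := by
    rw [hzt, hz1]
    have : ((Ft.card : ℕ) : ℝ) ≤ ((m ^ d * F1.card : ℕ) : ℝ) := by exact_mod_cast hcount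
    push_cast at this ⊢
    linarith
  refine hstep.trans ?_
  have hpow : ((m:ℝ)) ^ d ≤ (5 * t) ^ d :=
    pow_le_pow_left₀ (by positivity) hm5 d
  have hz1nn : (0:ℝ) ≤ (zetaSet K 1 : ℝ) := Nat.cast_nonneg _
  calc ((m:ℝ)) ^ d * (zetaSet K 1 : ℝ) ≤ (5 * t) ^ d * (zetaSet K 1 : ℝ) :=
        mul_le_mul_of_nonneg_right hpow hz1nn
    _ = 5 ^ d * t ^ d * (zetaSet K 1 : ℝ) := by rw [mul_pow]
end

section
/- Let d be a positive integer and N = (N_1, …, N_d) with each N_i an integer greater than 1. Let σ: Ω_N → {1, …, |Ω_N|} assign to each point of Ω_N its rank in the lexicographic order on ℤ^d. Let A_N be the set system of all arithmetic progressions in Ω_N and M_N the set system of all maximal arithmetic progressions in Ω_N. Then disc(A_N) ≤ 2 · pdisc(M_N, σ). -/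
open scoped Pointwise BigOperators

namespace Stmt15Aux


variable {d : ℕ}

/-- strict lex order -/
def lexLt (x y : Fin d → ℤ) : Prop :=
  ∃ i : Fin d, (∀ j : Fin d, j < i → x j = y j) ∧ x i < y i

lemma lexLe_iff (x y : Fin d → ℤ) : lexLe x y ↔ x = y ∨ lexLt x y := Iff.rfl

lemma lexLt_irrefl (x : Fin d → ℤ) : ¬ lexLt x x := by
  rintro ⟨i, -, h⟩; exact lt_irrefl _ h

lemma lexLt_trans {x y z : Fin d → ℤ} (h1 : lexLt x y) (h2 : lexLt y z) : lexLt x z := by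
  obtain ⟨i, hi, hxi⟩ := h1
  obtain ⟨k, hk, hyk⟩ := h2
  rcases lt_trichotomy i k with h | h | h
  · exact ⟨i, fun j hj => (hi j hj).trans (hk j (hj.trans h)), hxi.trans_eq (hk i h)⟩
  · subst h; exact ⟨i, fun j hj => (hi j hj).trans (hk j hj), hxi.trans hyk⟩
  · exact ⟨k, fun j hj => (hi j (hj.trans h)).trans (hk j hj), (hi k h).trans_lt hyk⟩

lemma lexLt_asymm {x y : Fin d → ℤ} (h : lexLt x y) : ¬ lexLt y x :=
  fun h' => lexLt_irrefl x (lexLt_trans h h')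

lemma lexLt_total {x y : Fin d → ℤ} (h : x ≠ y) : lexLt x y ∨ lexLt y x := by
  have hne : (Finset.univ.filter fun i => x i ≠ y i).Nonempty := by
    by_contra hcon
    rw [Finset.not_nonempty_iff_eq_empty] at hcon
    apply h; funext i
    by_contra hi
    have : i ∈ Finset.univ.filter fun i => x i ≠ y i := by simp [hi]
    simp [hcon] at this
  set s := Finset.univ.filter fun i => x i ≠ y i with hs
  set i0 := s.min' hne with hi0
  have hmem : i0 ∈ s := s.min'_mem hne
  have hne0 : x i0 ≠ y i0 := by simpa [hs] using hmem
  have hpre : ∀ j : Fin d, j < i0 → x j = y j := by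
    intro j hj
    by_contra hji
    have : j ∈ s := by simp [hs, hji]
    exact absurd (s.min'_le j this) (not_le.2 hj)
  rcases lt_or_gt_of_ne hne0 with hlt | hgt
  · exact Or.inl ⟨i0, hpre, hlt⟩
  · exact Or.inr ⟨i0, fun j hj => (hpre j hj).symm, hgt⟩

lemma lexLe_refl (x : Fin d → ℤ) : lexLe x x := Or.inl rfl

lemma lexLe_trans {x y z : Fin d → ℤ} (h1 : lexLe x y) (h2 : lexLe y z) : lexLe x z := by
  rcases h1 with rfl | h1
  · exact h2
  rcases h2 with rfl | h2
  · exact Or.inr h1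
  · exact Or.inr (lexLt_trans h1 h2)

lemma omega_finite (N : Fin d → ℤ) : (OmegaN N).Finite := by
  apply Set.Finite.subset (Set.Finite.pi (fun i => Set.finite_Icc (1 : ℤ) (N i)))
  intro x hx
  simp only [Set.mem_pi, Set.mem_univ, Set.mem_Icc, forall_true_left]
  exact fun i => hx i


/-- the rank function -/
noncomputable def sg (N : Fin d → ℤ) (x : Fin d → ℤ) : ℕ := {y ∈ OmegaN N | lexLe y x}.ncard

lemma down_finite (N : Fin d → ℤ) (x : Fin d → ℤ) : {y ∈ OmegaN N | lexLe y x}.Finite :=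
  (omega_finite N).subset (Set.sep_subset _ _)

lemma sg_strict_mono {N : Fin d → ℤ} {x y : Fin d → ℤ} (hx : x ∈ OmegaN N)
    (hy : y ∈ OmegaN N) (hxy : lexLt x y) : sg N x < sg N y := by
  apply Set.ncard_lt_ncard ?_ (down_finite N y)
  constructor
  · rintro z ⟨hz, hzx⟩
    exact ⟨hz, lexLe_trans hzx (Or.inr hxy)⟩
  · intro hsub
    have hymem : y ∈ {y_1 ∈ OmegaN N | lexLe y_1 y} := ⟨hy, lexLe_refl y⟩
    have := hsub hymem
    rcases this.2 with rfl | hlt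
    · exact lexLt_irrefl y hxy
    · exact lexLt_asymm hxy hlt

lemma sg_le_iff {N : Fin d → ℤ} {x y : Fin d → ℤ} (hx : x ∈ OmegaN N)
    (hy : y ∈ OmegaN N) : sg N x ≤ sg N y ↔ lexLe x y := by
  constructor
  · intro h
    by_contra hle
    have hne : x ≠ y := fun he => hle (Or.inl he)
    rcases lexLt_total hne with hlt | hlt
    · exact hle (Or.inr hlt)
    · exact absurd h (not_le.2 (sg_strict_mono hy hx hlt))
  · rintro (rfl | hlt)
    · exact le_rfl
    · exact (sg_strict_mono hx hy hlt).le

lemma sg_pos {N : Fin d → ℤ} {x : Fin d → ℤ} (hx : x ∈ OmegaN N) : 1 ≤ sg N x := by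
  have : x ∈ {y ∈ OmegaN N | lexLe y x} := ⟨hx, lexLe_refl x⟩
  have hpos : 0 < sg N x := by
    rw [sg, Set.ncard_pos (down_finite N x)]
    exact ⟨x, this⟩
  omega

/-- lex positivity -/
def lexPos (b : Fin d → ℤ) : Prop := ∃ i : Fin d, (∀ j : Fin d, j < i → b j = 0) ∧ 0 < b i

lemma lexPos_or_neg {b : Fin d → ℤ} (hb : b ≠ 0) : lexPos b ∨ lexPos (-b) := by
  have hne : (Finset.univ.filter fun i => b i ≠ 0).Nonempty := by
    by_contra hcon
    rw [Finset.not_nonempty_iff_eq_empty] at hcon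
    apply hb; funext i
    simp only [Pi.zero_apply]
    by_contra hi
    have : i ∈ Finset.univ.filter fun i => b i ≠ 0 := by simp [hi]
    simp [hcon] at this
  set s := Finset.univ.filter fun i => b i ≠ 0 with hs
  set i0 := s.min' hne with hi0
  have hmem : i0 ∈ s := s.min'_mem hne
  have hne0 : b i0 ≠ 0 := by simpa [hs] using hmem
  have hpre : ∀ j : Fin d, j < i0 → b j = 0 := by
    intro j hj
    by_contra hji
    have : j ∈ s := by simp [hs, hji]
    exact absurd (s.min'_le j this) (not_le.2 hj)
  rcases lt_or_gt_of_ne hne0 with hlt | hgt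
  · exact Or.inr ⟨i0, fun j hj => by simp [hpre j hj], by simpa using hlt⟩
  · exact Or.inl ⟨i0, hpre, hgt⟩

lemma lexLt_smul {b : Fin d → ℤ} (hb : lexPos b) (a : Fin d → ℤ) {i i' : ℤ} (h : i < i') :
    lexLt (a + i • b) (a + i' • b) := by
  obtain ⟨k, hk, hbk⟩ := hb
  refine ⟨k, fun j hj => by simp [hk j hj], ?_⟩
  simp only [Pi.add_apply, Pi.smul_apply, smul_eq_mul]
  have := mul_lt_mul_of_pos_right h hbk
  linarith

lemma phi_inj {b : Fin d → ℤ} (hb : lexPos b) (a : Fin d → ℤ) :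
    Function.Injective (fun i : ℤ => a + i • b) := by
  intro i i' hii
  have hii' : a + i • b = a + i' • b := hii
  by_contra hne
  rcases lt_or_gt_of_ne hne with h | h
  · exact lexLt_irrefl _ (hii' ▸ lexLt_smul hb a h)
  · exact lexLt_irrefl _ (hii' ▸ lexLt_smul hb a h)

lemma lexLe_smul_iff {b : Fin d → ℤ} (hb : lexPos b) (a : Fin d → ℤ) (i i' : ℤ) :
    lexLe (a + i • b) (a + i' • b) ↔ i ≤ i' := by
  constructor
  · intro h
    by_contra hlt
    push_neg at hlt
    have h2 := lexLt_smul hb a hlt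
    rcases h with he | hl
    · have := phi_inj hb a he
      omega
    · exact lexLt_asymm hl h2
  · intro h
    rcases eq_or_lt_of_le h with rfl | h
    · exact lexLe_refl _
    · exact Or.inr (lexLt_smul hb a h)

lemma core (N : Fin d → ℤ) (χ : (Fin d → ℤ) → Bool) (a b : Fin d → ℤ) (hb : lexPos b)
    (ℓ : ℕ) :
    ∃ j1 j2 : ℕ,
      (∑ᶠ x ∈ OmegaN N ∩ APset a b ℓ, (if χ x then (1:ℝ) else -1)) =
      (∑ᶠ x ∈ {y ∈ OmegaN N | y ∈ MAPN N a b ∧ sg N y ≤ j2}, (if χ x then (1:ℝ) else -1)) -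
      (∑ᶠ x ∈ {y ∈ OmegaN N | y ∈ MAPN N a b ∧ sg N y ≤ j1}, (if χ x then (1:ℝ) else -1)) := by
  set ε : (Fin d → ℤ) → ℝ := fun x => if χ x then (1:ℝ) else -1 with hε
  set φ : ℤ → (Fin d → ℤ) := fun i => a + i • b with hφ
  have hinj : Function.Injective φ := phi_inj hb a
  set J : Set ℤ := φ ⁻¹' OmegaN N with hJ
  have hJfin : J.Finite := (omega_finite N).preimage hinj.injOn
  have hT : OmegaN N ∩ APset a b ℓ = φ '' (J ∩ Set.Ico 0 (ℓ:ℤ)) := by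
    ext z
    constructor
    · rintro ⟨hz, i, hi, rfl⟩
      refine ⟨(i:ℤ), ⟨hz, ?_, ?_⟩, rfl⟩
      · exact Int.ofNat_nonneg i
      · exact_mod_cast hi
    · rintro ⟨i, ⟨hmem, h0, hℓ⟩, rfl⟩
      refine ⟨hmem, i.toNat, by omega, ?_⟩
      simp [hφ, Int.toNat_of_nonneg h0]
  have hM : MAPN N a b = φ '' J := by
    ext z
    constructor
    · rintro ⟨⟨i, rfl⟩, hz⟩
      exact ⟨i, hz, rfl⟩
    · rintro ⟨i, hz, rfl⟩
      exact ⟨⟨i, rfl⟩, hz⟩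
  have hpref : ∀ j : ℕ, {y ∈ OmegaN N | y ∈ MAPN N a b ∧ sg N y ≤ j}
      = φ '' {i ∈ J | sg N (φ i) ≤ j} := by
    intro j
    ext z
    constructor
    · rintro ⟨hz, hzM, hzj⟩
      rw [hM] at hzM
      obtain ⟨i, hiJ, rfl⟩ := hzM
      exact ⟨i, ⟨hiJ, hzj⟩, rfl⟩
    · rintro ⟨i, ⟨hiJ, hij⟩, rfl⟩
      exact ⟨hiJ, by rw [hM]; exact ⟨i, hiJ, rfl⟩, hij⟩
  have hmono : ∀ i ∈ J, ∀ i' ∈ J, (sg N (φ i) ≤ sg N (φ i') ↔ i ≤ i') := by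
    intro i hi i' hi'
    rw [sg_le_iff hi hi']
    exact lexLe_smul_iff hb a i i'
  set I2 : Set ℤ := J ∩ Set.Ico 0 (ℓ:ℤ) with hI2
  have hI2fin : I2.Finite := hJfin.inter_of_left _
  rcases I2.eq_empty_or_nonempty with hI2e | hI2ne
  · refine ⟨0, 0, ?_⟩
    rw [hT, hI2e]
    simp
  · have hI2ne' : hI2fin.toFinset.Nonempty := by
      rw [Set.Finite.toFinset_nonempty]; exact hI2ne
    set i2 : ℤ := hI2fin.toFinset.max' hI2ne' with hi2
    have hi2mem : i2 ∈ I2 := by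
      have := hI2fin.toFinset.max'_mem hI2ne'
      rwa [Set.Finite.mem_toFinset] at this
    have hi2max : ∀ i ∈ I2, i ≤ i2 := fun i hi =>
      hI2fin.toFinset.le_max' i (hI2fin.mem_toFinset.2 hi)
    have claim2 : {i ∈ J | sg N (φ i) ≤ sg N (φ i2)} = J ∩ Set.Iio (ℓ:ℤ) := by
      ext i
      constructor
      · rintro ⟨hiJ, hle⟩
        have : i ≤ i2 := (hmono i hiJ i2 hi2mem.1).1 hle
        exact ⟨hiJ, lt_of_le_of_lt this hi2mem.2.2⟩
      · rintro ⟨hiJ, hiℓ⟩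
        refine ⟨hiJ, (hmono i hiJ i2 hi2mem.1).2 ?_⟩
        by_contra hgt
        push_neg at hgt
        have hiI2 : i ∈ I2 := ⟨hiJ, le_trans hi2mem.2.1 hgt.le, hiℓ⟩
        exact absurd (hi2max i hiI2) (not_le.2 hgt)
    set I1 : Set ℤ := J ∩ Set.Iio (0:ℤ) with hI1
    have hI1fin : I1.Finite := hJfin.inter_of_left _
    have hzero : {i ∈ J | sg N (φ i) ≤ 0} = (∅ : Set ℤ) := by
      ext i
      simp only [Set.mem_setOf_eq, Set.mem_empty_iff_false, iff_false, not_and]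
      intro hiJ
      have := sg_pos (x := φ i) hiJ
      omega
    rcases I1.eq_empty_or_nonempty with hI1e | hI1ne
    · refine ⟨0, sg N (φ i2), ?_⟩
      have heq : J ∩ Set.Iio (ℓ:ℤ) = I2 := by
        ext i
        constructor
        · rintro ⟨hiJ, hiℓ⟩
          refine ⟨hiJ, ?_, hiℓ⟩
          by_contra h0
          push_neg at h0
          have : i ∈ I1 := ⟨hiJ, h0⟩
          simp [hI1e] at this
        · rintro ⟨hiJ, -, hiℓ⟩
          exact ⟨hiJ, hiℓ⟩
      rw [hT, hpref, hpref, claim2, hzero, heq]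
      simp
    · have hI1ne' : hI1fin.toFinset.Nonempty := by
        rw [Set.Finite.toFinset_nonempty]; exact hI1ne
      set i1 : ℤ := hI1fin.toFinset.max' hI1ne' with hi1
      have hi1mem : i1 ∈ I1 := by
        have := hI1fin.toFinset.max'_mem hI1ne'
        rwa [Set.Finite.mem_toFinset] at this
      have hi1max : ∀ i ∈ I1, i ≤ i1 := fun i hi =>
        hI1fin.toFinset.le_max' i (hI1fin.mem_toFinset.2 hi)
      have claim1 : {i ∈ J | sg N (φ i) ≤ sg N (φ i1)} = I1 := by
        ext i
        constructor
        · rintro ⟨hiJ, hle⟩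
          have : i ≤ i1 := (hmono i hiJ i1 hi1mem.1).1 hle
          exact ⟨hiJ, lt_of_le_of_lt this hi1mem.2⟩
        · rintro ⟨hiJ, hi0⟩
          exact ⟨hiJ, (hmono i hiJ i1 hi1mem.1).2 (hi1max i ⟨hiJ, hi0⟩)⟩
      have hsplit : J ∩ Set.Iio (ℓ:ℤ) = I1 ∪ I2 := by
        ext i
        simp only [hI1, hI2, Set.mem_inter_iff, Set.mem_Iio, Set.mem_union, Set.mem_Ico]
        constructor
        · rintro ⟨hiJ, hiℓ⟩
          rcases lt_or_ge i 0 with h | h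
          · exact Or.inl ⟨hiJ, h⟩
          · exact Or.inr ⟨hiJ, h, hiℓ⟩
        · rintro (⟨hiJ, h⟩ | ⟨hiJ, -, h⟩)
          · exact ⟨hiJ, lt_of_lt_of_le h (by positivity)⟩
          · exact ⟨hiJ, h⟩
      have hdisj : Disjoint I1 I2 := by
        rw [Set.disjoint_left]
        rintro i ⟨-, hi0⟩ ⟨-, hi0', -⟩
        simp only [Set.mem_Iio] at hi0
        omega
      refine ⟨sg N (φ i1), sg N (φ i2), ?_⟩
      rw [hT, hpref, hpref, claim2, claim1, hsplit,
        finsum_mem_image hinj.injOn, finsum_mem_image hinj.injOn,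
        finsum_mem_image hinj.injOn,
        finsum_mem_union hdisj hI1fin hI2fin]
      ring
lemma APset_rev (a b : Fin d → ℤ) (ℓ : ℕ) :
    APset a b ℓ = APset (a + ((ℓ - 1 : ℕ) : ℤ) • b) (-b) ℓ := by
  ext z
  constructor
  · rintro ⟨i, hi, rfl⟩
    refine ⟨ℓ - 1 - i, by omega, ?_⟩
    have hc : ((ℓ - 1 - i : ℕ) : ℤ) = ((ℓ - 1 : ℕ) : ℤ) - (i : ℤ) := by omega
    funext j
    simp only [Pi.add_apply, Pi.smul_apply, Pi.neg_apply, smul_eq_mul, hc]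
    ring
  · rintro ⟨i, hi, rfl⟩
    refine ⟨ℓ - 1 - i, by omega, ?_⟩
    have hc : ((ℓ - 1 - i : ℕ) : ℤ) = ((ℓ - 1 : ℕ) : ℤ) - (i : ℤ) := by omega
    funext j
    simp only [Pi.add_apply, Pi.smul_apply, Pi.neg_apply, smul_eq_mul, hc]
    ring

lemma MAPN_rev (N : Fin d → ℤ) (a b : Fin d → ℤ) (c : ℤ) :
    MAPN N a b = MAPN N (a + c • b) (-b) := by
  unfold MAPN
  congr 1
  ext z
  constructor
  · rintro ⟨i, rfl⟩
    refine ⟨c - i, ?_⟩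
    funext j
    simp only [Pi.add_apply, Pi.smul_apply, Pi.neg_apply, smul_eq_mul]
    ring
  · rintro ⟨i, rfl⟩
    refine ⟨c - i, ?_⟩
    funext j
    simp only [Pi.add_apply, Pi.smul_apply, Pi.neg_apply, smul_eq_mul]
    ring

lemma exists_two_prefixes (N : Fin d → ℤ) (χ : (Fin d → ℤ) → Bool)
    (S : Set (Fin d → ℤ)) (hS : S ∈ APsys (OmegaN N)) :
    ∃ (a b : Fin d → ℤ) (j1 j2 : ℕ),
      (∑ᶠ x ∈ S, (if χ x then (1:ℝ) else -1)) =
      (∑ᶠ x ∈ {y ∈ OmegaN N | y ∈ MAPN N a b ∧ sg N y ≤ j2}, (if χ x then (1:ℝ) else -1)) -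
      (∑ᶠ x ∈ {y ∈ OmegaN N | y ∈ MAPN N a b ∧ sg N y ≤ j1}, (if χ x then (1:ℝ) else -1)) := by
  obtain ⟨a, b, ℓ, hℓ, rfl⟩ := hS
  by_cases hb0 : b = 0
  · subst hb0
    have hAP : APset a (0 : Fin d → ℤ) ℓ = {a} := by
      ext z
      constructor
      · rintro ⟨i, hi, rfl⟩
        simp
      · rintro rfl
        exact ⟨0, hℓ, by simp⟩
    have hMAP : MAPN N a (0 : Fin d → ℤ) = {a} ∩ OmegaN N := by
      unfold MAPN
      congr 1
      ext z
      constructor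
      · rintro ⟨i, rfl⟩
        simp
      · rintro rfl
        exact ⟨0, by simp⟩
    have hzero : {y ∈ OmegaN N | y ∈ MAPN N a (0 : Fin d → ℤ) ∧ sg N y ≤ 0} = ∅ := by
      ext y
      simp only [Set.mem_setOf_eq, Set.mem_empty_iff_false, iff_false, not_and]
      intro hy _
      have := sg_pos hy
      omega
    by_cases ha : a ∈ OmegaN N
    · refine ⟨a, 0, 0, sg N a, ?_⟩
      have hP2 : {y ∈ OmegaN N | y ∈ MAPN N a (0 : Fin d → ℤ) ∧ sg N y ≤ sg N a}
          = OmegaN N ∩ APset a (0 : Fin d → ℤ) ℓ := by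
        rw [hAP, hMAP]
        ext y
        constructor
        · rintro ⟨hy, ⟨hy2, -⟩, -⟩
          exact ⟨hy, hy2⟩
        · rintro ⟨hy, hy2⟩
          rcases hy2 with rfl
          exact ⟨hy, ⟨rfl, hy⟩, le_rfl⟩
      rw [hP2, hzero]
      simp
    · refine ⟨a, 0, 0, 0, ?_⟩
      have hT : OmegaN N ∩ APset a (0 : Fin d → ℤ) ℓ = ∅ := by
        rw [hAP]
        ext y
        simp only [Set.mem_inter_iff, Set.mem_singleton_iff, Set.mem_empty_iff_false,
          iff_false, not_and]
        rintro hy rfl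
        exact ha hy
      rw [hT, hzero]
      simp
  · rcases lexPos_or_neg hb0 with hb | hb
    · obtain ⟨j1, j2, h⟩ := core N χ a b hb ℓ
      exact ⟨a, b, j1, j2, h⟩
    · obtain ⟨j1, j2, h⟩ := core N χ (a + ((ℓ - 1 : ℕ) : ℤ) • b) (-b) hb ℓ
      refine ⟨a + ((ℓ - 1 : ℕ) : ℤ) • b, -b, j1, j2, ?_⟩
      rw [APset_rev a b ℓ]
      exact h
lemma abs_finsum_le (N : Fin d → ℤ) (χ : (Fin d → ℤ) → Bool) {A : Set (Fin d → ℤ)}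
    (hsub : A ⊆ OmegaN N) :
    |∑ᶠ x ∈ A, (if χ x then (1:ℝ) else -1)| ≤ ((OmegaN N).ncard : ℝ) := by
  have hAfin : A.Finite := (omega_finite N).subset hsub
  rw [← Set.Finite.coe_toFinset hAfin, finsum_mem_coe_finset]
  calc |∑ x ∈ hAfin.toFinset, (if χ x then (1:ℝ) else -1)|
      ≤ ∑ x ∈ hAfin.toFinset, |if χ x then (1:ℝ) else -1| := Finset.abs_sum_le_sum_abs _ _
    _ = ∑ _x ∈ hAfin.toFinset, (1:ℝ) := by
        apply Finset.sum_congr rfl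
        intro x _
        split_ifs <;> simp
    _ = (hAfin.toFinset.card : ℝ) := by simp
    _ = (A.ncard : ℝ) := by rw [Set.ncard_eq_toFinset_card A hAfin]
    _ ≤ ((OmegaN N).ncard : ℝ) := by
        exact_mod_cast Set.ncard_le_ncard hsub (omega_finite N)


theorem stmt15' (d : ℕ) (N : Fin d → ℤ) :
    discSys (APsys (OmegaN N)) ≤
      2 * pdiscS (OmegaN N) {S | ∃ a b : Fin d → ℤ, S = MAPN N a b}
        (fun x => {y ∈ OmegaN N | lexLe y x}.ncard) := by
  classical
  set ℳ : Set (Set (Fin d → ℤ)) := {S | ∃ a b : Fin d → ℤ, S = MAPN N a b} with hℳ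
  set C : ℝ := ((OmegaN N).ncard : ℝ) with hC
  have hC0 : 0 ≤ C := by positivity
  set F : ((Fin d → ℤ) → Bool) → ℝ := fun χ =>
    ⨆ S ∈ APsys (OmegaN N), |∑ᶠ x ∈ S, (if χ x then (1 : ℝ) else -1)| with hF
  set G : ((Fin d → ℤ) → Bool) → ℝ := fun χ =>
    ⨆ j : ℕ, ⨆ S ∈ ℳ,
      |∑ᶠ x ∈ {y ∈ OmegaN N | y ∈ S ∧ sg N y ≤ j}, (if χ x then (1 : ℝ) else -1)| with hG
  have hdisc : discSys (APsys (OmegaN N)) = ⨅ χ, F χ := rfl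
  have hpd : pdiscS (OmegaN N) ℳ (fun x => {y ∈ OmegaN N | lexLe y x}.ncard) = ⨅ χ, G χ := rfl
  -- prefix sums are bounded by G χ
  have pref_le_G : ∀ (χ : (Fin d → ℤ) → Bool) (a b : Fin d → ℤ) (j : ℕ),
      |∑ᶠ x ∈ {y ∈ OmegaN N | y ∈ MAPN N a b ∧ sg N y ≤ j}, (if χ x then (1:ℝ) else -1)|
        ≤ G χ := by
    intro χ a b j
    have hterm : ∀ (j : ℕ) (S : Set (Fin d → ℤ)),
        (⨆ _ : S ∈ ℳ, |∑ᶠ x ∈ {y ∈ OmegaN N | y ∈ S ∧ sg N y ≤ j},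
          (if χ x then (1:ℝ) else -1)|) ≤ C := by
      intro j S
      apply Real.iSup_le _ hC0
      intro _
      exact abs_finsum_le N χ (Set.sep_subset _ _)
    have hMmem : MAPN N a b ∈ ℳ := ⟨a, b, rfl⟩
    have h1 : |∑ᶠ x ∈ {y ∈ OmegaN N | y ∈ MAPN N a b ∧ sg N y ≤ j},
          (if χ x then (1:ℝ) else -1)|
        ≤ ⨆ _ : MAPN N a b ∈ ℳ, |∑ᶠ x ∈ {y ∈ OmegaN N | y ∈ MAPN N a b ∧ sg N y ≤ j},
          (if χ x then (1:ℝ) else -1)| := by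
      apply le_ciSup _ hMmem
      refine ⟨|∑ᶠ x ∈ {y ∈ OmegaN N | y ∈ MAPN N a b ∧ sg N y ≤ j},
        (if χ x then (1:ℝ) else -1)|, ?_⟩
      rintro x ⟨_, rfl⟩
      exact le_rfl
    have h2 : (⨆ _ : MAPN N a b ∈ ℳ, |∑ᶠ x ∈ {y ∈ OmegaN N | y ∈ MAPN N a b ∧ sg N y ≤ j},
          (if χ x then (1:ℝ) else -1)|)
        ≤ ⨆ S ∈ ℳ, |∑ᶠ x ∈ {y ∈ OmegaN N | y ∈ S ∧ sg N y ≤ j},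
          (if χ x then (1:ℝ) else -1)| := by
      apply le_ciSup (f := fun S => ⨆ _ : S ∈ ℳ,
        |∑ᶠ x ∈ {y ∈ OmegaN N | y ∈ S ∧ sg N y ≤ j}, (if χ x then (1:ℝ) else -1)|)
        ⟨C, ?_⟩ (MAPN N a b)
      rintro x ⟨S, rfl⟩
      exact hterm j S
    have h3 : (⨆ S ∈ ℳ, |∑ᶠ x ∈ {y ∈ OmegaN N | y ∈ S ∧ sg N y ≤ j},
          (if χ x then (1:ℝ) else -1)|) ≤ G χ := by
      apply le_ciSup (f := fun j : ℕ => ⨆ S ∈ ℳ,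
        |∑ᶠ x ∈ {y ∈ OmegaN N | y ∈ S ∧ sg N y ≤ j}, (if χ x then (1:ℝ) else -1)|)
        ⟨C, ?_⟩ j
      rintro x ⟨j', rfl⟩
      exact Real.iSup_le (fun S => hterm j' S) hC0
    exact (h1.trans h2).trans h3
  have hG0 : ∀ χ, 0 ≤ G χ := by
    intro χ
    exact Real.iSup_nonneg fun j => Real.iSup_nonneg fun S => Real.iSup_nonneg fun _ =>
      abs_nonneg _
  have hF0 : ∀ χ, 0 ≤ F χ := by
    intro χ
    exact Real.iSup_nonneg fun S => Real.iSup_nonneg fun _ => abs_nonneg _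
  have key : ∀ χ, F χ ≤ 2 * G χ := by
    intro χ
    have h2G0 : 0 ≤ 2 * G χ := by linarith [hG0 χ]
    apply Real.iSup_le _ h2G0
    intro S
    apply Real.iSup_le _ h2G0
    intro hS
    obtain ⟨a, b, j1, j2, heq⟩ := exists_two_prefixes N χ S hS
    rw [heq]
    calc |_ - _| ≤ |_| + |_| := abs_sub _ _
      _ ≤ G χ + G χ := add_le_add (pref_le_G χ a b j2) (pref_le_G χ a b j1)
      _ = 2 * G χ := by ring
  rw [hdisc, hpd]
  have h1 : ∀ χ, (⨅ χ, F χ) ≤ 2 * G χ := by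
    intro χ
    refine le_trans (ciInf_le ⟨0, ?_⟩ χ) (key χ)
    rintro x ⟨χ', rfl⟩
    exact hF0 χ'
  have h2 : (⨅ χ, F χ) / 2 ≤ ⨅ χ, G χ := by
    apply le_ciInf
    intro χ
    linarith [h1 χ]
  linarith [h2]

end Stmt15Aux

/-- with σ the lexicographic rank on Ω_N,
disc(A_N) ≤ 2 · pdisc(M_N, σ). -/
theorem stmt15 (d : ℕ) (hd : 0 < d) (N : Fin d → ℤ) (hN : ∀ i, 1 < N i) :
    discSys (APsys (OmegaN N)) ≤
      2 * pdiscS (OmegaN N) {S | ∃ a b : Fin d → ℤ, S = MAPN N a b}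
        (fun x => {y ∈ OmegaN N | lexLe y x}.ncard) := by
  open Stmt15Aux in
  exact Stmt15Aux.stmt15' d N
end

section
/- Let d be a positive integer and N = (N_1, …, N_d) with N_1 ≥ N_2 ≥ ⋯ ≥ N_d ≥ 2 and N_1 even. Let N' = (N_1/2, N_2, …, N_d). Then f(N') ≤ 2^{−1/((2d+2)(2d+4))} · f(N). -/
open scoped Pointwise BigOperators

private lemma stmt18_arith1 (r D lA lP l2 : ℝ) (hr : 0 ≤ r) (hrD : r + 1 ≤ D) (hl2 : 0 < l2)
    (hA : l2 ≤ lA) (hP : lP ≤ r * lA) :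
    (1/(2*r+2)) * lP ≤ -1/((2*D+2)*(2*D+4)) * l2 + 1/(2*(r+1)+2) * (lA + lP) := by
  have hre : 2*(r+1)+2 = 2*r+4 := by ring
  rw [hre]
  have h1 : (0:ℝ) < 2*r+2 := by linarith
  have h2 : (0:ℝ) < 2*r+4 := by linarith
  have h3 : (0:ℝ) < (2*D+2)*(2*D+4) := by nlinarith
  have hlA : 0 < lA := lt_of_lt_of_le hl2 hA
  have hG : 0 ≤ 2*((2*D+2)*(2*D+4)) - (2*r+2)*(2*r+4) := by nlinarith
  rw [← sub_nonneg]
  have key : 0 ≤ (-( (2*r+2)*(2*r+4) ) * l2 + (2*r+2)*((2*D+2)*(2*D+4)) * (lA + lP))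
      - (2*r+4) * ((2*D+2)*(2*D+4)) * lP := by
    nlinarith [mul_le_mul_of_nonneg_left hP (by nlinarith : (0:ℝ) ≤ 2*((2*D+2)*(2*D+4))),
      mul_le_mul_of_nonneg_left hA (by nlinarith : (0:ℝ) ≤ (2*r+2)*(2*r+4)),
      mul_nonneg hG hlA.le]
  have heq : -1/((2*D+2)*(2*D+4)) * l2 + 1/(2*r+4) * (lA + lP) - 1/(2*r+2) * lP
      = ((-( (2*r+2)*(2*r+4) ) * l2 + (2*r+2)*((2*D+2)*(2*D+4)) * (lA + lP))
        - (2*r+4) * ((2*D+2)*(2*D+4)) * lP) / ((2*r+2)*(2*r+4)*((2*D+2)*(2*D+4))) := by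
    generalize (2*D+2)*(2*D+4) = X at h3 ⊢
    field_simp
  rw [heq]
  positivity

private lemma stmt18_arith2 (r D l2 lP : ℝ) (hr : 0 ≤ r) (hrD : r ≤ D) (hl2 : 0 < l2) :
    1/(2*r+2) * (lP - l2) ≤ -1/((2*D+2)*(2*D+4)) * l2 + 1/(2*r+2) * lP := by
  have h1 : (0:ℝ) < 2*r+2 := by linarith
  have h3 : (0:ℝ) < (2*D+2)*(2*D+4) := by nlinarith
  rw [← sub_nonneg]
  have hgap : 2*r+2 ≤ (2*D+2)*(2*D+4) := by nlinarith
  have key : 0 ≤ ((2*D+2)*(2*D+4) - (2*r+2)) * l2 := mul_nonneg (by linarith) hl2.le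
  have heq : -1/((2*D+2)*(2*D+4)) * l2 + 1/(2*r+2) * lP - 1/(2*r+2) * (lP - l2)
      = (((2*D+2)*(2*D+4) - (2*r+2)) * l2) / ((2*r+2)*((2*D+2)*(2*D+4))) := by
    generalize (2*D+2)*(2*D+4) = X at h3 ⊢
    field_simp; ring
  rw [heq]
  positivity


/-- halving the largest side length decreases f by a definite factor:
f(N') ≤ 2^{−1/((2d+2)(2d+4))} f(N). -/
theorem stmt18 (d : ℕ) (hd : 0 < d) (N : Fin d → ℤ)
    (hmono : ∀ i j : Fin d, i ≤ j → N j ≤ N i) (h2 : ∀ i, 2 ≤ N i)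
    (heven : 2 ∣ N ⟨0, hd⟩) :
    fVec (Function.update N ⟨0, hd⟩ (N ⟨0, hd⟩ / 2)) ≤
      (2 : ℝ) ^ (-(1 : ℝ) / ((2 * (d : ℝ) + 2) * (2 * (d : ℝ) + 4))) * fVec N := by
  classical
  set z : Fin d := ⟨0, hd⟩ with hzdef
  set c : ℝ := (2:ℝ) ^ (-(1:ℝ)/((2*(d:ℝ)+2)*(2*(d:ℝ)+4))) with hcdef
  have hc0 : (0:ℝ) < c := Real.rpow_pos_of_pos two_pos _
  have hl2 : (0:ℝ) < Real.log 2 := Real.log_pos (by norm_num)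
  have hlogc : Real.log c = -1/((2*(d:ℝ)+2)*(2*(d:ℝ)+4)) * Real.log 2 := by
    rw [hcdef, Real.log_rpow two_pos]
  have hNpos : ∀ i, (0:ℝ) < (N i : ℝ) := fun i => by
    have := h2 i; exact_mod_cast (by linarith : (0:ℤ) < N i)
  have h2half : (2:ℤ) * (N z / 2) = N z := Int.mul_ediv_cancel' heven
  have hhalfR : ((N z / 2 : ℤ) : ℝ) = (N z : ℝ) / 2 := by
    have h : (2:ℝ) * ((N z / 2 : ℤ) : ℝ) = (N z : ℝ) := by exact_mod_cast h2half
    linarith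
  have hzle : ∀ i : Fin d, z ≤ i := fun i => by
    rw [hzdef]; exact Fin.mk_le_of_le_val (Nat.zero_le _)
  have hA2 : (2:ℝ) ≤ (N z : ℝ) := by exact_mod_cast h2 z
  simp only [fVec]
  have hbdd : BddAbove (Set.range fun J : Finset (Fin d) =>
      (∏ i ∈ J, (N i:ℝ)) ^ ((1:ℝ)/(2*(J.card:ℝ)+2))) :=
    Set.Finite.bddAbove (Set.finite_range _)
  apply ciSup_le
  intro I
  have hPpos : 0 < ∏ i ∈ I, (N i : ℝ) := Finset.prod_pos fun i _ => hNpos i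
  have hkd : (I.card : ℝ) ≤ (d : ℝ) := by
    have : I.card ≤ d := by simpa using I.card_le_univ
    exact_mod_cast this
  by_cases hzI : z ∈ I
  · -- z ∈ I : the halved product
    have hsplit' : ∏ i ∈ I, (Function.update N z (N z / 2) i : ℝ)
        = (∏ i ∈ I, (N i : ℝ)) / 2 := by
      rw [← Finset.mul_prod_erase I _ hzI, ← Finset.mul_prod_erase I (fun i => ((N i:ℤ):ℝ)) hzI]
      have he : ∏ i ∈ I.erase z, (Function.update N z (N z / 2) i : ℝ)
          = ∏ i ∈ I.erase z, (N i : ℝ) :=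
        Finset.prod_congr rfl fun i hi => by
          rw [Function.update_of_ne (Finset.ne_of_mem_erase hi)]
      rw [he, Function.update_self, hhalfR]; ring
    calc (∏ i ∈ I, (Function.update N z (N z / 2) i : ℝ)) ^ ((1:ℝ)/(2*(I.card:ℝ)+2))
        ≤ c * (∏ i ∈ I, (N i:ℝ)) ^ ((1:ℝ)/(2*(I.card:ℝ)+2)) := by
          rw [hsplit']
          rw [← Real.log_le_log_iff (Real.rpow_pos_of_pos (by positivity) _)
              (mul_pos hc0 (Real.rpow_pos_of_pos hPpos _)),
            Real.log_rpow (by positivity),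
            Real.log_mul hc0.ne' (Real.rpow_pos_of_pos hPpos _).ne',
            Real.log_rpow hPpos, Real.log_div hPpos.ne' two_ne_zero, hlogc]
          exact stmt18_arith2 _ _ _ _ (by positivity) hkd hl2
      _ ≤ c * ⨆ J : Finset (Fin d), (∏ i ∈ J, (N i:ℝ)) ^ ((1:ℝ)/(2*(J.card:ℝ)+2)) :=
          mul_le_mul_of_nonneg_left (le_ciSup hbdd I) hc0.le
  · -- z ∉ I : compare with insert z I
    have hsame : ∏ i ∈ I, (Function.update N z (N z / 2) i : ℝ) = ∏ i ∈ I, (N i : ℝ) :=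
      Finset.prod_congr rfl fun i hi => by
        rw [Function.update_of_ne (by rintro rfl; exact hzI hi)]
    have hJcard : (insert z I).card = I.card + 1 := Finset.card_insert_of_notMem hzI
    have hk1d : (I.card : ℝ) + 1 ≤ (d:ℝ) := by
      have : I.card + 1 ≤ d := by
        have := (insert z I).card_le_univ; rw [hJcard] at this; simpa using this
      exact_mod_cast this
    have hprodJ : ∏ i ∈ insert z I, (N i : ℝ) = (N z : ℝ) * ∏ i ∈ I, (N i : ℝ) :=
      Finset.prod_insert hzI
    have hPA : Real.log (∏ i ∈ I, (N i : ℝ)) ≤ (I.card : ℝ) * Real.log (N z : ℝ) := by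
      rw [Real.log_prod (fun i _ => (hNpos i).ne')]
      calc ∑ i ∈ I, Real.log (N i : ℝ) ≤ ∑ i ∈ I, Real.log (N z : ℝ) :=
            Finset.sum_le_sum fun i _ => Real.log_le_log (hNpos i)
              (by exact_mod_cast hmono z i (hzle i))
        _ = (I.card : ℝ) * Real.log (N z : ℝ) := by
            rw [Finset.sum_const, nsmul_eq_mul]
    have hl2A : Real.log 2 ≤ Real.log (N z : ℝ) := Real.log_le_log two_pos hA2
    calc (∏ i ∈ I, (Function.update N z (N z / 2) i : ℝ)) ^ ((1:ℝ)/(2*(I.card:ℝ)+2))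
        ≤ c * (∏ i ∈ insert z I, (N i:ℝ)) ^ ((1:ℝ)/(2*(((insert z I).card):ℝ)+2)) := by
          rw [hsame, hprodJ, hJcard]
          push_cast
          have hANpos : (0:ℝ) < (N z : ℝ) * ∏ i ∈ I, (N i : ℝ) :=
            mul_pos (hNpos z) hPpos
          rw [← Real.log_le_log_iff (Real.rpow_pos_of_pos hPpos _)
              (mul_pos hc0 (Real.rpow_pos_of_pos hANpos _)),
            Real.log_rpow hPpos,
            Real.log_mul hc0.ne' (Real.rpow_pos_of_pos hANpos _).ne',
            Real.log_rpow hANpos, Real.log_mul (hNpos z).ne' hPpos.ne', hlogc]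
          exact stmt18_arith1 _ _ _ _ _ (by positivity) hk1d hl2 hl2A hPA
      _ ≤ c * ⨆ J : Finset (Fin d), (∏ i ∈ J, (N i:ℝ)) ^ ((1:ℝ)/(2*(J.card:ℝ)+2)) :=
          mul_le_mul_of_nonneg_left (le_ciSup hbdd (insert z I)) hc0.le
end
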